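/- arXiv:2004.02180 — 7 statements merged into one kernel-verified Lean document; each statement's English description precedes it below -/
import Mathlib

section
/- Let n ≤ m and let {A,B} be an (m,p,n)-GMP with GSVD as in the context, with generalized singular values (αᵢ, βᵢ). Then for every 1 ≤ i ≤ n, αᵢ² equals the difference of maxima: αᵢ² = max_{Φ ∈ 𝕌_m} Re tr(Aᴴ Φᴴ Q_i Φ A (AᴴA + BᴴB)^{-1}) − max_{Φ ∈ 𝕌_m} Re tr(Aᴴ Φᴴ Q_{i-1} Φ A (AᴴA + BᴴB)^{-1}). -/
open Matrix BigOperators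
open scoped ComplexOrder

lemma card_lt_sum {m k : ℕ} (hk : k ≤ m) :
    ∑ j : Fin m, (if (j:ℕ) < k then (1:ℝ) else 0) = k := by
  rw [Fin.sum_univ_eq_sum_range (fun j => if j < k then (1:ℝ) else 0)]
  rw [Finset.sum_ite, Finset.sum_const, Finset.sum_const]
  have : Finset.filter (fun j => j < k) (Finset.range m) = Finset.range k := by
    ext x; simp [Nat.lt_of_lt_of_le, fun h : x < k => lt_of_lt_of_le h hk]
    intro h; exact lt_of_lt_of_le h hk
  simp [this]

lemma rearr {m : ℕ} (d c : Fin m → ℝ) (hd : Antitone d) (hd0 : ∀ j, 0 ≤ d j)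
    (hc0 : ∀ j, 0 ≤ c j) (hc1 : ∀ j, c j ≤ 1) (k : ℕ) (hk : k ≤ m)
    (hsum : ∑ j, c j = k) :
    ∑ j, d j * c j ≤ ∑ j : Fin m, if (j:ℕ) < k then d j else 0 := by
  set t : ℝ := if h : k < m then d ⟨k, h⟩ else 0 with ht
  have h1 : ∀ j : Fin m, d j * c j - (if (j:ℕ) < k then d j else 0)
      ≤ t * (c j - if (j:ℕ) < k then 1 else 0) := by
    intro j
    by_cases hj : (j:ℕ) < k
    · simp only [hj, if_pos]
      have htd : t ≤ d j := by
        by_cases hkm : k < m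
        · rw [ht, dif_pos hkm]
          exact hd (by simp [Fin.le_def]; omega)
        · rw [ht, dif_neg hkm]; exact hd0 j
      nlinarith [hc1 j]
    · simp only [hj, if_neg, not_false_iff]
      have hkm : k < m := lt_of_le_of_lt (le_of_not_gt hj) j.isLt
      have htd : d j ≤ t := by
        rw [ht, dif_pos hkm]
        exact hd (by simp [Fin.le_def]; omega)
      nlinarith [hc0 j]
  have h2 := Finset.sum_le_sum (fun j (_ : j ∈ Finset.univ) => h1 j)
  simp only [mul_sub] at h2
  have h3 : ∑ x : Fin m, (t * c x - t * if (x:ℕ) < k then 1 else 0) = 0 := by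
    rw [Finset.sum_sub_distrib, ← Finset.mul_sum, ← Finset.mul_sum, hsum, card_lt_sum hk]
    ring
  rw [h3] at h2
  rw [Finset.sum_sub_distrib] at h2
  linarith

lemma trace_re_formula {m : ℕ} (q d : Fin m → ℝ) (Ψ : Matrix (Fin m) (Fin m) ℂ) :
    (Matrix.trace (Matrix.diagonal (fun r => (q r : ℂ)) * Ψ *
      Matrix.diagonal (fun j => (d j : ℂ)) * Ψᴴ)).re
    = ∑ r, ∑ j, q r * (d j * Complex.normSq (Ψ r j)) := by
  have hentry : ∀ r : Fin m, (Matrix.diagonal (fun r => (q r : ℂ)) * Ψ *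
      Matrix.diagonal (fun j => (d j : ℂ)) * Ψᴴ) r r
      = ∑ j, ((q r * (d j * Complex.normSq (Ψ r j)) : ℝ) : ℂ) := by
    intro r
    rw [Matrix.mul_apply]
    refine Finset.sum_congr rfl fun j _ => ?_
    rw [Matrix.mul_diagonal, Matrix.diagonal_mul, Matrix.conjTranspose_apply]
    have : Ψ r j * star (Ψ r j) = (Complex.normSq (Ψ r j) : ℂ) := Complex.mul_conj _
    push_cast
    linear_combination (↑(q r) * ↑(d j) : ℂ) * this
  unfold Matrix.trace
  rw [Complex.re_sum]
  refine Finset.sum_congr rfl fun r _ => ?_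
  rw [Matrix.diag_apply, hentry r, ← Complex.ofReal_sum, Complex.ofReal_re]

lemma sup_helper {m : ℕ} (d : Fin m → ℝ) (hd : Antitone d) (hd0 : ∀ j, 0 ≤ d j)
    (k : ℕ) (hk : k ≤ m) :
    (⨆ Ψ : Matrix.unitaryGroup (Fin m) ℂ,
      (Matrix.trace (Matrix.diagonal (fun r : Fin m => if (r:ℕ) < k then (1:ℂ) else 0) *
        (Ψ : Matrix (Fin m) (Fin m) ℂ) * Matrix.diagonal (fun j => (d j : ℂ)) *
        (Ψ : Matrix (Fin m) (Fin m) ℂ)ᴴ)).re)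
    = ∑ j : Fin m, if (j:ℕ) < k then d j else 0 := by
  set q : Fin m → ℝ := fun r => if (r:ℕ) < k then 1 else 0 with hq
  have hqdiag : (Matrix.diagonal (fun r : Fin m => if (r:ℕ) < k then (1:ℂ) else 0))
      = Matrix.diagonal (fun r => (q r : ℂ)) := by
    refine congrArg Matrix.diagonal (funext fun r => ?_)
    by_cases h : (r:ℕ) < k <;> simp [hq, h]
  set S : ℝ := ∑ j : Fin m, if (j:ℕ) < k then d j else 0 with hS
  have key : ∀ Ψ : Matrix (Fin m) (Fin m) ℂ,
      (Matrix.trace (Matrix.diagonal (fun r : Fin m => if (r:ℕ) < k then (1:ℂ) else 0) *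
        Ψ * Matrix.diagonal (fun j => (d j : ℂ)) * Ψᴴ)).re
      = ∑ j : Fin m, d j * (∑ r : Fin m, q r * Complex.normSq (Ψ r j)) := by
    intro Ψ
    rw [hqdiag, trace_re_formula, Finset.sum_comm]
    refine Finset.sum_congr rfl fun j _ => ?_
    rw [Finset.mul_sum]
    exact Finset.sum_congr rfl fun r _ => by ring
  have bound : ∀ Ψ ∈ Matrix.unitaryGroup (Fin m) ℂ,
      (Matrix.trace (Matrix.diagonal (fun r : Fin m => if (r:ℕ) < k then (1:ℂ) else 0) *
        Ψ * Matrix.diagonal (fun j => (d j : ℂ)) * Ψᴴ)).re ≤ S := by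
    intro Ψ hΨ
    rw [key]
    set c : Fin m → ℝ := fun j => ∑ r : Fin m, q r * Complex.normSq (Ψ r j) with hc
    have hcol : ∀ j : Fin m, ∑ r : Fin m, Complex.normSq (Ψ r j) = 1 := by
      intro j
      have h1 : (Ψᴴ * Ψ) j j = 1 := by
        rw [← Matrix.star_eq_conjTranspose, (Matrix.mem_unitaryGroup_iff'.mp hΨ : star Ψ * Ψ = 1)]
        simp [Matrix.one_apply]
      rw [Matrix.mul_apply] at h1
      have h2 : ∑ r : Fin m, ((Complex.normSq (Ψ r j) : ℝ) : ℂ) = 1 := by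
        rw [← h1]
        refine Finset.sum_congr rfl fun r _ => ?_
        rw [Matrix.conjTranspose_apply, RCLike.star_def, mul_comm, Complex.mul_conj]
      rw [← Complex.ofReal_sum] at h2
      exact_mod_cast h2
    have hrow : ∀ r : Fin m, ∑ j : Fin m, Complex.normSq (Ψ r j) = 1 := by
      intro r
      have h1 : (Ψ * Ψᴴ) r r = 1 := by
        rw [← Matrix.star_eq_conjTranspose, (Matrix.mem_unitaryGroup_iff.mp hΨ : Ψ * star Ψ = 1)]
        simp [Matrix.one_apply]
      rw [Matrix.mul_apply] at h1
      have h2 : ∑ j : Fin m, ((Complex.normSq (Ψ r j) : ℝ) : ℂ) = 1 := by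
        rw [← h1]
        refine Finset.sum_congr rfl fun j _ => ?_
        rw [Matrix.conjTranspose_apply, RCLike.star_def, Complex.mul_conj]
      rw [← Complex.ofReal_sum] at h2
      exact_mod_cast h2
    have hc0 : ∀ j, 0 ≤ c j := by
      intro j
      refine Finset.sum_nonneg fun r _ => mul_nonneg ?_ (Complex.normSq_nonneg _)
      rw [hq]; positivity
    have hc1 : ∀ j, c j ≤ 1 := by
      intro j
      rw [hc]
      calc ∑ r : Fin m, q r * Complex.normSq (Ψ r j)
          ≤ ∑ r : Fin m, Complex.normSq (Ψ r j) := by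
            refine Finset.sum_le_sum fun r _ => ?_
            have : q r ≤ 1 := by by_cases h : (r:ℕ) < k <;> simp [hq, h]
            nlinarith [Complex.normSq_nonneg (Ψ r j)]
        _ = 1 := hcol j
    have hcsum : ∑ j, c j = (k : ℝ) := by
      rw [hc, Finset.sum_comm]
      have : ∀ r : Fin m, ∑ j : Fin m, q r * Complex.normSq (Ψ r j) = q r := by
        intro r; rw [← Finset.mul_sum, hrow r, mul_one]
      rw [Finset.sum_congr rfl fun r _ => this r]
      exact card_lt_sum hk
    exact rearr d c hd hd0 hc0 hc1 k hk hcsum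
  have attain : (Matrix.trace (Matrix.diagonal (fun r : Fin m => if (r:ℕ) < k then (1:ℂ) else 0) *
        (1 : Matrix (Fin m) (Fin m) ℂ) * Matrix.diagonal (fun j => (d j : ℂ)) *
        (1 : Matrix (Fin m) (Fin m) ℂ)ᴴ)).re = S := by
    rw [key, hS]
    refine Finset.sum_congr rfl fun j _ => ?_
    have : ∀ r : Fin m, Complex.normSq ((1 : Matrix (Fin m) (Fin m) ℂ) r j)
        = if r = j then 1 else 0 := by
      intro r; rw [Matrix.one_apply]; split <;> simp
    rw [Finset.sum_congr rfl fun r _ => by rw [this r]]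
    simp only [mul_ite, mul_one, mul_zero, Finset.sum_ite_eq', Finset.mem_univ, if_true, hq]
  have hb : BddAbove (Set.range fun Ψ : Matrix.unitaryGroup (Fin m) ℂ =>
      (Matrix.trace (Matrix.diagonal (fun r : Fin m => if (r:ℕ) < k then (1:ℂ) else 0) *
        (Ψ : Matrix (Fin m) (Fin m) ℂ) * Matrix.diagonal (fun j => (d j : ℂ)) *
        (Ψ : Matrix (Fin m) (Fin m) ℂ)ᴴ)).re) := by
    refine ⟨S, ?_⟩
    rintro x ⟨Ψ, rfl⟩
    exact bound _ Ψ.2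
  refine le_antisymm (ciSup_le fun Ψ => bound _ Ψ.2) ?_
  have h1 := le_ciSup hb (1 : Matrix.unitaryGroup (Fin m) ℂ)
  have hone : ((1 : Matrix.unitaryGroup (Fin m) ℂ) : Matrix (Fin m) (Fin m) ℂ) = 1 := rfl
  rw [hone, attain] at h1
  exact h1

theorem stmt0
    {m p n : ℕ} (hnm : n ≤ m)
    (A : Matrix (Fin m) (Fin n) ℂ) (B : Matrix (Fin p) (Fin n) ℂ)
    (hrank : (Matrix.fromRows A B).rank = n)
    (U : Matrix (Fin m) (Fin m) ℂ) (hU : U ∈ Matrix.unitaryGroup (Fin m) ℂ)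
    (R : Matrix (Fin n) (Fin n) ℂ) (hR : IsUnit R.det)
    (α : Fin n → ℝ)
    (hα0 : ∀ k, 0 ≤ α k) (hα1 : ∀ k, α k ≤ 1) (hmono : Antitone α)
    (hA : A = U * (Matrix.of fun (k : Fin m) (l : Fin n) =>
        if (k : ℕ) = (l : ℕ) then Complex.ofReal (α l) else 0) * R)
    (hBB : Bᴴ * B = Rᴴ * Matrix.diagonal (fun l => Complex.ofReal (1 - α l ^ 2)) * R)
    (i : Fin n) :
    α i ^ 2 =
(⨆ Φ : Matrix.unitaryGroup (Fin m) ℂ,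
      (Matrix.trace (Aᴴ * (Φ : Matrix (Fin m) (Fin m) ℂ)ᴴ *
        Matrix.diagonal (fun k : Fin m => if (k : ℕ) ≤ (i : ℕ) then (1 : ℂ) else 0) *
        (Φ : Matrix (Fin m) (Fin m) ℂ) * A * (Aᴴ * A + Bᴴ * B)⁻¹)).re) -
(⨆ Φ : Matrix.unitaryGroup (Fin m) ℂ,
      (Matrix.trace (Aᴴ * (Φ : Matrix (Fin m) (Fin m) ℂ)ᴴ *
        Matrix.diagonal (fun k : Fin m => if (k : ℕ) < (i : ℕ) then (1 : ℂ) else 0) *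
        (Φ : Matrix (Fin m) (Fin m) ℂ) * A * (Aᴴ * A + Bᴴ * B)⁻¹)).re) := by
  classical
  set Sg : Matrix (Fin m) (Fin n) ℂ := Matrix.of fun (k : Fin m) (l : Fin n) =>
        if (k : ℕ) = (l : ℕ) then Complex.ofReal (α l) else 0 with hSg
  set d : Fin m → ℝ := fun j : Fin m => if h : (j:ℕ) < n then α ⟨(j:ℕ), h⟩ ^ 2 else 0 with hd
  have hd0 : ∀ j, 0 ≤ d j := by
    intro j; rw [hd]; dsimp only
    split
    · exact sq_nonneg _
    · exact le_refl 0
  have hdanti : Antitone d := by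
    intro a b hab
    rw [hd]; dsimp only
    by_cases hb : (b:ℕ) < n
    · have ha : (a:ℕ) < n := lt_of_le_of_lt hab hb
      rw [dif_pos hb, dif_pos ha]
      have h1 : α ⟨(b:ℕ), hb⟩ ≤ α ⟨(a:ℕ), ha⟩ :=
        hmono (show ((⟨(a:ℕ), ha⟩ : Fin n)) ≤ ⟨(b:ℕ), hb⟩ from hab)
      nlinarith [hα0 ⟨(b:ℕ),hb⟩, hα0 ⟨(a:ℕ),ha⟩]
    · rw [dif_neg hb]
      split
      · exact sq_nonneg _
      · exact le_refl 0
  have hUU : Uᴴ * U = 1 := by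
    rw [← Matrix.star_eq_conjTranspose]
    exact Matrix.mem_unitaryGroup_iff'.mp hU
  -- Sg * Sgᴴ = diagonal d
  have hSS : Sg * Sgᴴ = Matrix.diagonal (fun j : Fin m => (d j : ℂ)) := by
    ext k l
    rw [Matrix.mul_apply, Matrix.diagonal_apply]
    by_cases hkn : (k:ℕ) < n
    · rw [Finset.sum_eq_single (⟨(k:ℕ), hkn⟩ : Fin n)]
      · rw [hSg, Matrix.conjTranspose_apply]
        simp only [Matrix.of_apply]
        by_cases hkl : k = l
        · subst hkl
          simp [hd, hkn, sq, Complex.ext_iff, Complex.normSq]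
        · have : (l:ℕ) ≠ (k:ℕ) := fun h => hkl (Fin.ext h.symm)
          simp [this, hkl]
      · intro j _ hj
        rw [hSg, Matrix.conjTranspose_apply]
        simp only [Matrix.of_apply]
        have : (k:ℕ) ≠ (j:ℕ) := by
          intro h; exact hj (Fin.ext (by simpa using h.symm))
        simp [this]
      · simp
    · rw [Finset.sum_eq_zero, eq_comm]
      · have hdk : d k = 0 := by rw [hd]; simp [hkn]
        simp [hdk]
      · intro j _
        rw [hSg]
        simp only [Matrix.of_apply]
        have : (k:ℕ) ≠ (j:ℕ) := by omega
        simp [this]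
  have hStS : Sgᴴ * Sg = Matrix.diagonal (fun l : Fin n => ((α l : ℂ))^2) := by
    ext k l
    rw [Matrix.mul_apply, Matrix.diagonal_apply]
    rw [Finset.sum_eq_single (Fin.castLE hnm k)]
    · rw [hSg, Matrix.conjTranspose_apply]
      simp only [Matrix.of_apply, Fin.coe_castLE]
      by_cases hkl : k = l
      · subst hkl
        simp [sq, Complex.ext_iff, Complex.normSq]
      · have : ¬ ((k:ℕ) = (l:ℕ)) := fun h => hkl (Fin.ext h)
        simp [this, hkl]
    · intro j _ hj
      rw [hSg, Matrix.conjTranspose_apply]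
      simp only [Matrix.of_apply]
      have : (j:ℕ) ≠ (k:ℕ) := by
        intro h; exact hj (Fin.ext (by simpa using h))
      simp [this]
    · simp
  have hAA : Aᴴ * A = Rᴴ * Matrix.diagonal (fun l : Fin n => ((α l : ℂ))^2) * R := by
    have h0 : Aᴴ * A = Rᴴ * (Sgᴴ * ((Uᴴ * U) * (Sg * R))) := by
      rw [hA]
      simp only [Matrix.conjTranspose_mul]
      simp [Matrix.mul_assoc]
    rw [h0, hUU, Matrix.one_mul, ← Matrix.mul_assoc Sgᴴ Sg R, hStS, Matrix.mul_assoc]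
  have hM : Aᴴ * A + Bᴴ * B = Rᴴ * R := by
    rw [hAA, hBB]
    have : Rᴴ * Matrix.diagonal (fun l : Fin n => ((α l : ℂ))^2) * R +
        Rᴴ * Matrix.diagonal (fun l => Complex.ofReal (1 - α l ^ 2)) * R
        = Rᴴ * (Matrix.diagonal (fun l : Fin n => ((α l : ℂ))^2) +
          Matrix.diagonal (fun l => Complex.ofReal (1 - α l ^ 2))) * R := by
      rw [Matrix.mul_add, Matrix.add_mul]
    rw [this, Matrix.diagonal_add]
    have hone : (fun l : Fin n => ((α l : ℂ))^2 + Complex.ofReal (1 - α l ^ 2)) = fun _ => (1:ℂ) := by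
      funext l; push_cast; ring
    rw [hone, Matrix.diagonal_one, Matrix.mul_one]
  have hRdet : IsUnit (Rᴴ).det := by
    rw [Matrix.det_conjTranspose]
    exact hR.star
  have hMinv : (Aᴴ * A + Bᴴ * B)⁻¹ = R⁻¹ * (Rᴴ)⁻¹ := by
    rw [hM, Matrix.mul_inv_rev]
  have hAMA : A * (Aᴴ * A + Bᴴ * B)⁻¹ * Aᴴ
      = U * Matrix.diagonal (fun j : Fin m => (d j : ℂ)) * Uᴴ := by
    rw [hMinv, hA]
    have h1 : R * R⁻¹ = 1 := Matrix.mul_nonsing_inv R hR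
    have h2 : (Rᴴ)⁻¹ * Rᴴ = 1 := Matrix.nonsing_inv_mul Rᴴ hRdet
    have e : U * Sg * R * (R⁻¹ * (Rᴴ)⁻¹) * (U * Sg * R)ᴴ
        = U * (Sg * ((R * R⁻¹) * (((Rᴴ)⁻¹ * Rᴴ) * (Sgᴴ * Uᴴ)))) := by
      simp only [Matrix.conjTranspose_mul]
      simp [Matrix.mul_assoc]
    rw [e, h1, h2, Matrix.one_mul, Matrix.one_mul, ← Matrix.mul_assoc Sg Sgᴴ Uᴴ, hSS,
      Matrix.mul_assoc]
  have tr_eq : ∀ (Q : Matrix (Fin m) (Fin m) ℂ) (Φ : Matrix (Fin m) (Fin m) ℂ),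
      Matrix.trace (Aᴴ * Φᴴ * Q * Φ * A * (Aᴴ * A + Bᴴ * B)⁻¹)
        = Matrix.trace (Q * (Φ * U) * Matrix.diagonal (fun j : Fin m => (d j : ℂ)) * (Φ * U)ᴴ) := by
    intro Q Φ
    have e1 : Aᴴ * Φᴴ * Q * Φ * A * (Aᴴ * A + Bᴴ * B)⁻¹
        = Aᴴ * (Φᴴ * (Q * (Φ * (A * (Aᴴ * A + Bᴴ * B)⁻¹)))) := by simp [Matrix.mul_assoc]
    rw [e1, Matrix.trace_mul_comm]
    have e2 : Φᴴ * (Q * (Φ * (A * (Aᴴ * A + Bᴴ * B)⁻¹))) * Aᴴ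
        = Φᴴ * (Q * (Φ * (A * (Aᴴ * A + Bᴴ * B)⁻¹ * Aᴴ))) := by simp [Matrix.mul_assoc]
    rw [e2, hAMA, Matrix.trace_mul_comm]
    congr 1
    simp only [Matrix.conjTranspose_mul]
    simp [Matrix.mul_assoc]
  set u : Matrix.unitaryGroup (Fin m) ℂ := ⟨U, hU⟩ with hu
  have hsur : Function.Surjective (fun Φ : Matrix.unitaryGroup (Fin m) ℂ => Φ * u) :=
    (Equiv.mulRight u).surjective
  have coe_mul : ∀ Φ : Matrix.unitaryGroup (Fin m) ℂ,
      ((Φ * u : Matrix.unitaryGroup (Fin m) ℂ) : Matrix (Fin m) (Fin m) ℂ)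
      = (Φ : Matrix (Fin m) (Fin m) ℂ) * U := fun Φ => rfl
  have hin : (i:ℕ) + 1 ≤ m := le_trans (Nat.succ_le_of_lt i.isLt) hnm
  have him : (i:ℕ) ≤ m := le_of_lt (lt_of_lt_of_le i.isLt hnm)
  have sup1 : (⨆ Φ : Matrix.unitaryGroup (Fin m) ℂ,
      (Matrix.trace (Aᴴ * (Φ : Matrix (Fin m) (Fin m) ℂ)ᴴ *
        Matrix.diagonal (fun k : Fin m => if (k : ℕ) ≤ (i : ℕ) then (1 : ℂ) else 0) *
        (Φ : Matrix (Fin m) (Fin m) ℂ) * A * (Aᴴ * A + Bᴴ * B)⁻¹)).re)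
      = ∑ j : Fin m, if (j:ℕ) < (i:ℕ) + 1 then d j else 0 := by
    set g : Matrix.unitaryGroup (Fin m) ℂ → ℝ := fun Ψ =>
      (Matrix.trace (Matrix.diagonal (fun r : Fin m => if (r:ℕ) < (i:ℕ) + 1 then (1:ℂ) else 0) *
        (Ψ : Matrix (Fin m) (Fin m) ℂ) * Matrix.diagonal (fun j : Fin m => (d j : ℂ)) *
        (Ψ : Matrix (Fin m) (Fin m) ℂ)ᴴ)).re with hg
    have hQ : (Matrix.diagonal (fun k : Fin m => if (k : ℕ) ≤ (i : ℕ) then (1 : ℂ) else 0))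
        = Matrix.diagonal (fun r : Fin m => if (r:ℕ) < (i:ℕ) + 1 then (1:ℂ) else 0) := by
      refine congrArg Matrix.diagonal (funext fun r => ?_)
      by_cases h : (r:ℕ) ≤ (i:ℕ) <;> simp [h, Nat.lt_succ_iff]
    calc (⨆ Φ : Matrix.unitaryGroup (Fin m) ℂ,
      (Matrix.trace (Aᴴ * (Φ : Matrix (Fin m) (Fin m) ℂ)ᴴ *
        Matrix.diagonal (fun k : Fin m => if (k : ℕ) ≤ (i : ℕ) then (1 : ℂ) else 0) *
        (Φ : Matrix (Fin m) (Fin m) ℂ) * A * (Aᴴ * A + Bᴴ * B)⁻¹)).re)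
        = ⨆ Φ : Matrix.unitaryGroup (Fin m) ℂ, g (Φ * u) := by
          refine iSup_congr fun Φ => ?_
          rw [hQ, tr_eq, hg]
          dsimp only
          rw [coe_mul Φ]
      _ = ⨆ Ψ, g Ψ := hsur.iSup_comp g
      _ = ∑ j : Fin m, if (j:ℕ) < (i:ℕ) + 1 then d j else 0 := by
          rw [hg]
          exact sup_helper d hdanti hd0 ((i:ℕ) + 1) hin
  have sup2 : (⨆ Φ : Matrix.unitaryGroup (Fin m) ℂ,
      (Matrix.trace (Aᴴ * (Φ : Matrix (Fin m) (Fin m) ℂ)ᴴ *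
        Matrix.diagonal (fun k : Fin m => if (k : ℕ) < (i : ℕ) then (1 : ℂ) else 0) *
        (Φ : Matrix (Fin m) (Fin m) ℂ) * A * (Aᴴ * A + Bᴴ * B)⁻¹)).re)
      = ∑ j : Fin m, if (j:ℕ) < (i:ℕ) then d j else 0 := by
    set g : Matrix.unitaryGroup (Fin m) ℂ → ℝ := fun Ψ =>
      (Matrix.trace (Matrix.diagonal (fun r : Fin m => if (r:ℕ) < (i:ℕ) then (1:ℂ) else 0) *
        (Ψ : Matrix (Fin m) (Fin m) ℂ) * Matrix.diagonal (fun j : Fin m => (d j : ℂ)) *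
        (Ψ : Matrix (Fin m) (Fin m) ℂ)ᴴ)).re with hg
    calc (⨆ Φ : Matrix.unitaryGroup (Fin m) ℂ,
      (Matrix.trace (Aᴴ * (Φ : Matrix (Fin m) (Fin m) ℂ)ᴴ *
        Matrix.diagonal (fun k : Fin m => if (k : ℕ) < (i : ℕ) then (1 : ℂ) else 0) *
        (Φ : Matrix (Fin m) (Fin m) ℂ) * A * (Aᴴ * A + Bᴴ * B)⁻¹)).re)
        = ⨆ Φ : Matrix.unitaryGroup (Fin m) ℂ, g (Φ * u) := by
          refine iSup_congr fun Φ => ?_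
          rw [tr_eq, hg]
          dsimp only
          rw [coe_mul Φ]
      _ = ⨆ Ψ, g Ψ := hsur.iSup_comp g
      _ = ∑ j : Fin m, if (j:ℕ) < (i:ℕ) then d j else 0 := by
          rw [hg]
          exact sup_helper d hdanti hd0 (i:ℕ) him
  rw [sup1, sup2, ← Finset.sum_sub_distrib]
  have hterm : ∀ j : Fin m, (if (j:ℕ) < (i:ℕ) + 1 then d j else 0)
      - (if (j:ℕ) < (i:ℕ) then d j else 0)
      = if j = Fin.castLE hnm i then d j else 0 := by
    intro j
    by_cases hji : j = Fin.castLE hnm i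
    · subst hji
      simp
    · have : (j:ℕ) ≠ (i:ℕ) := by
        intro h; exact hji (Fin.ext (by simpa using h))
      by_cases h1 : (j:ℕ) < (i:ℕ)
      · simp [h1, Nat.lt_succ_of_lt h1, hji]
      · have h2 : ¬ ((j:ℕ) < (i:ℕ) + 1) := by omega
        simp [h1, h2, hji]
  rw [Finset.sum_congr rfl fun j _ => hterm j, Finset.sum_ite_eq' Finset.univ (Fin.castLE hnm i) d]
  simp [hd, i.isLt]
end

section
/- Let n ≤ p and let {A,B} be an (m,p,n)-GMP with GSVD as in the context, with generalized singular values (αᵢ, βᵢ). Then for every 1 ≤ i ≤ n, βᵢ² equals the difference of maxima: βᵢ² = max_{Φ ∈ 𝕌_p} Re tr(Bᴴ Φᴴ P_i Φ B (AᴴA + BᴴB)^{-1}) − max_{Φ ∈ 𝕌_p} Re tr(Bᴴ Φᴴ P_{i+1} Φ B (AᴴA + BᴴB)^{-1}). -/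
open Matrix BigOperators
open scoped ComplexOrder

noncomputable def dd (p n : ℕ) (β : Fin n → ℝ) : Fin p → ℝ :=
  fun k => if h : p ≤ (k:ℕ) + n then β ⟨(k:ℕ) + n - p, by have := k.isLt; omega⟩ ^ 2 else 0

lemma sigma_mul_sigmaH {p n : ℕ} (β : Fin n → ℝ) :
    (Matrix.of fun (k : Fin p) (l : Fin n) =>
        if (k : ℕ) + n = p + (l : ℕ) then Complex.ofReal (β l) else 0) *
    (Matrix.of fun (k : Fin p) (l : Fin n) =>
        if (k : ℕ) + n = p + (l : ℕ) then Complex.ofReal (β l) else 0)ᴴ =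
    Matrix.diagonal (fun k : Fin p => (dd p n β k : ℂ)) := by
  ext k k'
  simp only [Matrix.mul_apply, Matrix.conjTranspose_apply, Matrix.of_apply]
  by_cases hkk : k = k'
  · subst hkk
    simp only [Matrix.diagonal_apply_eq, dd]
    by_cases h : p ≤ (k:ℕ) + n
    · have hb0 : ((k:ℕ) + n - p) < n := by have := k.isLt; omega
      rw [Finset.sum_eq_single (⟨(k:ℕ)+n-p, hb0⟩ : Fin n)]
      · have hc : (k:ℕ) + n = p + ((k:ℕ) + n - p) := by omega
        rw [if_pos (by exact_mod_cast hc), dif_pos h]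
        simp [Complex.star_def, Complex.conj_ofReal]
        push_cast
        ring
      · intro b _ hb
        rw [if_neg (fun hcon => hb (by ext; simp at hcon ⊢; omega)), zero_mul]
      · simp
    · rw [dif_neg h, Finset.sum_eq_zero]
      · simp
      · intro b _
        rw [if_neg (by omega), zero_mul]
  · rw [Matrix.diagonal_apply_ne _ hkk, Finset.sum_eq_zero]
    intro b _
    by_cases h2 : (k':ℕ) + n = p + (b:ℕ)
    · rw [if_neg (fun h1 : (k:ℕ) + n = p + (b:ℕ) => hkk (Fin.ext (by omega))), zero_mul]
    · rw [if_neg h2, star_zero, mul_zero]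



variable {m p n : ℕ}

lemma sigmaH_mul_sigma (hnp : n ≤ p) (β : Fin n → ℝ) :
    (Matrix.of fun (k : Fin p) (l : Fin n) =>
        if (k : ℕ) + n = p + (l : ℕ) then Complex.ofReal (β l) else 0)ᴴ *
    (Matrix.of fun (k : Fin p) (l : Fin n) =>
        if (k : ℕ) + n = p + (l : ℕ) then Complex.ofReal (β l) else 0) =
    Matrix.diagonal (fun l : Fin n => (β l : ℂ)^2) := by
  ext l l'
  simp only [Matrix.mul_apply, Matrix.conjTranspose_apply, Matrix.of_apply]
  by_cases hll : l = l'
  · subst hll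
    have hk0 : p + (l:ℕ) - n < p := by have := l.isLt; omega
    rw [Matrix.diagonal_apply_eq, Finset.sum_eq_single (⟨p + (l:ℕ) - n, hk0⟩ : Fin p)]
    · have hc : (p + (l:ℕ) - n) + n = p + (l:ℕ) := by have := l.isLt; omega
      rw [if_pos (by exact_mod_cast hc)]
      simp [Complex.star_def, Complex.conj_ofReal, sq]
    · intro b _ hb
      rw [if_neg (fun hcon : (b:ℕ) + n = p + (l:ℕ) => hb (Fin.ext (show (b:ℕ) = p + (l:ℕ) - n by omega))), star_zero,
        zero_mul]
    · simp
  · rw [Matrix.diagonal_apply_ne _ hll, Finset.sum_eq_zero]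
    intro b _
    by_cases h2 : (b:ℕ) + n = p + (l':ℕ)
    · rw [if_neg (fun h1 : (b:ℕ) + n = p + (l:ℕ) => hll (Fin.ext (by omega))), star_zero,
        zero_mul]
    · rw [if_neg h2, mul_zero]

lemma trace_eq (hnp : n ≤ p)
    (A : Matrix (Fin m) (Fin n) ℂ) (B : Matrix (Fin p) (Fin n) ℂ)
    (V : Matrix (Fin p) (Fin p) ℂ) (hV : V ∈ Matrix.unitaryGroup (Fin p) ℂ)
    (R : Matrix (Fin n) (Fin n) ℂ) (hR : IsUnit R.det)
    (β : Fin n → ℝ)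
    (hB : B = V * (Matrix.of fun (k : Fin p) (l : Fin n) =>
        if (k : ℕ) + n = p + (l : ℕ) then Complex.ofReal (β l) else 0) * R)
    (hAA : Aᴴ * A = Rᴴ * Matrix.diagonal (fun l => Complex.ofReal (1 - β l ^ 2)) * R)
    (t : ℕ) (Φ : Matrix (Fin p) (Fin p) ℂ) :
    (Matrix.trace (Bᴴ * Φᴴ *
        Matrix.diagonal (fun k : Fin p => if p + t ≤ (k : ℕ) + n then (1 : ℂ) else 0) *
        Φ * B * (Aᴴ * A + Bᴴ * B)⁻¹)).re =
    ∑ k : Fin p, ∑ j : Fin p,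
      (if p + t ≤ (k : ℕ) + n then dd p n β j * Complex.normSq ((Φ * V) k j) else 0) := by
  set S : Matrix (Fin p) (Fin n) ℂ := Matrix.of fun (k : Fin p) (l : Fin n) =>
        if (k : ℕ) + n = p + (l : ℕ) then Complex.ofReal (β l) else 0 with hS
  set g : Fin p → ℂ := fun k : Fin p => if p + t ≤ (k : ℕ) + n then (1 : ℂ) else 0 with hg
  set W : Matrix (Fin p) (Fin p) ℂ := Φ * V with hW
  have hVV : Vᴴ * V = 1 := by
    rw [← Matrix.star_eq_conjTranspose]; exact hV.1
  have hRH : IsUnit Rᴴ.det := by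
    rw [Matrix.det_conjTranspose]; exact hR.star
  -- M = Rᴴ R
  have hBB : Bᴴ * B = Rᴴ * Matrix.diagonal (fun l : Fin n => (β l : ℂ)^2) * R := by
    rw [hB]
    simp only [Matrix.conjTranspose_mul, Matrix.mul_assoc]
    rw [← Matrix.mul_assoc Vᴴ V, hVV, Matrix.one_mul, ← Matrix.mul_assoc Sᴴ S,
      sigmaH_mul_sigma hnp]
  have hM : Aᴴ * A + Bᴴ * B = Rᴴ * R := by
    rw [hAA, hBB, Matrix.mul_assoc, Matrix.mul_assoc, ← Matrix.mul_add, ← Matrix.add_mul,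
      Matrix.diagonal_add]
    have : (fun l : Fin n => Complex.ofReal (1 - β l ^ 2) + (β l : ℂ)^2) = fun _ => (1:ℂ) := by
      funext l; push_cast; ring
    rw [this, Matrix.diagonal_one, Matrix.one_mul]
  have hMinv : (Aᴴ * A + Bᴴ * B)⁻¹ = R⁻¹ * Rᴴ⁻¹ := by
    rw [hM, Matrix.mul_inv_rev]
  -- reduce the trace
  have hRRinv : R * (R⁻¹ * Rᴴ⁻¹) = Rᴴ⁻¹ := by
    rw [← Matrix.mul_assoc, Matrix.mul_nonsing_inv _ hR, Matrix.one_mul]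
  have key : Bᴴ * Φᴴ * Matrix.diagonal g * Φ * B * (Aᴴ * A + Bᴴ * B)⁻¹ =
      Rᴴ * ((Sᴴ * (Wᴴ * (Matrix.diagonal g * (W * S)))) * Rᴴ⁻¹) := by
    rw [hMinv, hB]
    simp only [hW, Matrix.conjTranspose_mul, Matrix.mul_assoc]
    rw [hRRinv]
  have tr1 : Matrix.trace (Bᴴ * Φᴴ * Matrix.diagonal g * Φ * B * (Aᴴ * A + Bᴴ * B)⁻¹) =
      Matrix.trace (Matrix.diagonal g * (W * (Matrix.diagonal (fun k : Fin p => (dd p n β k : ℂ)) * Wᴴ))) := by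
    rw [key, Matrix.trace_mul_comm Rᴴ, Matrix.mul_assoc, Matrix.nonsing_inv_mul _ hRH,
      Matrix.mul_one]
    rw [Matrix.trace_mul_comm Sᴴ]
    rw [show Wᴴ * (Matrix.diagonal g * (W * S)) * Sᴴ =
      Wᴴ * (Matrix.diagonal g * (W * (S * Sᴴ))) by simp only [Matrix.mul_assoc]]
    rw [sigma_mul_sigmaH, Matrix.trace_mul_comm Wᴴ]
    simp only [Matrix.mul_assoc]
  rw [tr1]
  have tr2 : Matrix.trace (Matrix.diagonal g * (W * (Matrix.diagonal (fun k : Fin p => (dd p n β k : ℂ)) * Wᴴ))) =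
      ∑ k : Fin p, g k * ∑ j : Fin p, (dd p n β j : ℂ) * (W k j * (starRingEnd ℂ) (W k j)) := by
    have e1 : ∀ (N : Matrix (Fin p) (Fin p) ℂ), Matrix.trace (Matrix.diagonal g * N) =
        ∑ k, g k * N k k := by
      intro N; simp [Matrix.trace, Matrix.diag, Matrix.diagonal_mul]
    rw [e1]
    congr 1; funext k; congr 1
    simp only [Matrix.mul_apply, Matrix.diagonal_mul, Matrix.conjTranspose_apply,
      Complex.star_def]
    congr 1; funext j
    simp only [Matrix.diagonal_apply, ite_mul, zero_mul, Finset.sum_ite_eq,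
      Finset.mem_univ, if_true, ← hW]
    ring
  rw [tr2, Complex.re_sum]
  congr 1; funext k
  by_cases hk : p + t ≤ (k:ℕ) + n
  · simp only [hg, if_pos hk, one_mul]
    rw [Complex.re_sum]
    congr 1; funext j
    rw [Complex.mul_conj]
    push_cast
    simp
  · simp [hg, if_neg hk]



lemma F_le (hnp : n ≤ p) (β : Fin n → ℝ) (hβ0 : ∀ k, 0 ≤ β k) (hmono : Monotone β)
    (t : ℕ) (ht : t ≤ n) (W : Matrix (Fin p) (Fin p) ℂ)
    (hW : W ∈ Matrix.unitaryGroup (Fin p) ℂ) :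
    ∑ k : Fin p, ∑ j : Fin p,
        (if p + t ≤ (k:ℕ) + n then dd p n β j * Complex.normSq (W k j) else 0) ≤
      ∑ j : Fin p, (if p + t ≤ (j:ℕ) + n then dd p n β j else 0) := by
  rcases eq_or_lt_of_le ht with rfl | htn
  · apply le_of_eq
    rw [Finset.sum_eq_zero, Finset.sum_eq_zero]
    · intro j _; rw [if_neg (by have := j.isLt; omega)]
    · intro k _
      apply Finset.sum_eq_zero
      intro j _; rw [if_neg (by have := k.isLt; omega)]
  · set c : ℝ := β ⟨t, htn⟩ ^ 2 with hc
    have h1 : ∀ j, (∑ k, (Complex.normSq (W k j) : ℂ)) = 1 := by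
      intro j
      have h := hW.1
      rw [← Matrix.ext_iff] at h
      have h2 := h j j
      rw [Matrix.mul_apply] at h2
      simp only [Matrix.star_apply, Matrix.one_apply_eq] at h2
      rw [← h2]
      congr 1; funext k
      rw [Complex.star_def, Complex.normSq_eq_conj_mul_self]
    have hcol : ∀ j, ∑ k, Complex.normSq (W k j) = 1 := by
      intro j; exact_mod_cast h1 j
    have h2 : ∀ k, (∑ j, (Complex.normSq (W k j) : ℂ)) = 1 := by
      intro k
      have h := hW.2
      rw [← Matrix.ext_iff] at h
      have h2 := h k k
      rw [Matrix.mul_apply] at h2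
      simp only [Matrix.star_apply, Matrix.one_apply_eq] at h2
      rw [← h2]
      congr 1; funext j
      rw [Complex.star_def, Complex.mul_conj]
    have hrow : ∀ k, ∑ j, Complex.normSq (W k j) = 1 := by
      intro k; exact_mod_cast h2 k
    set w : Fin p → ℝ := fun j => ∑ k : Fin p, if p + t ≤ (k:ℕ) + n then Complex.normSq (W k j) else 0
      with hwdef
    have step1 : ∑ k : Fin p, ∑ j : Fin p,
        (if p + t ≤ (k:ℕ) + n then dd p n β j * Complex.normSq (W k j) else 0) =
        ∑ j : Fin p, dd p n β j * w j := by
      rw [Finset.sum_comm]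
      refine Finset.sum_congr rfl fun j _ => ?_
      rw [hwdef, Finset.mul_sum]
      refine Finset.sum_congr rfl fun k _ => ?_
      split <;> simp
    have hw0 : ∀ j, 0 ≤ w j := by
      intro j
      apply Finset.sum_nonneg
      intro k _; split
      · exact Complex.normSq_nonneg _
      · exact le_refl 0
    have hw1 : ∀ j, w j ≤ 1 := by
      intro j
      rw [← hcol j]
      apply Finset.sum_le_sum
      intro k _; split
      · exact le_refl _
      · exact Complex.normSq_nonneg _
    have hsw : ∑ j, w j = ∑ j : Fin p, (if p + t ≤ (j:ℕ) + n then (1:ℝ) else 0) := by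
      rw [Finset.sum_comm]
      refine Finset.sum_congr rfl fun k _ => ?_
      by_cases h : p + t ≤ (k:ℕ) + n
      · simp [h, hrow k]
      · simp [h]
    rw [step1]
    have hterm : ∀ j : Fin p, dd p n β j * w j ≤
        (if p + t ≤ (j:ℕ) + n then dd p n β j else 0) +
          (c * w j - c * (if p + t ≤ (j:ℕ) + n then (1:ℝ) else 0)) := by
      intro j
      by_cases hSj : p + t ≤ (j:ℕ) + n
      · have hpj : p ≤ (j:ℕ) + n := le_trans (Nat.le_add_right p t) hSj
        have hdd : c ≤ dd p n β j := by
          simp only [dd, dif_pos hpj, hc]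
          exact pow_le_pow_left₀ (hβ0 _) (hmono (by simp [Fin.mk_le_mk]; omega)) 2
        simp only [if_pos hSj]
        nlinarith [mul_nonneg (sub_nonneg.mpr hdd) (sub_nonneg.mpr (hw1 j))]
      · have hdd : dd p n β j ≤ c := by
          by_cases hpj : p ≤ (j:ℕ) + n
          · simp only [dd, dif_pos hpj, hc]
            exact pow_le_pow_left₀ (hβ0 _) (hmono (by simp [Fin.mk_le_mk]; omega)) 2
          · simp only [dd, dif_neg hpj, hc]
            positivity
        simp only [if_neg hSj]
        nlinarith [hw0 j, mul_le_mul_of_nonneg_right hdd (hw0 j)]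
    calc ∑ j : Fin p, dd p n β j * w j
        ≤ ∑ j : Fin p, ((if p + t ≤ (j:ℕ) + n then dd p n β j else 0) +
          (c * w j - c * (if p + t ≤ (j:ℕ) + n then (1:ℝ) else 0))) :=
          Finset.sum_le_sum fun j _ => hterm j
      _ = ∑ j : Fin p, (if p + t ≤ (j:ℕ) + n then dd p n β j else 0) := by
          rw [Finset.sum_add_distrib, Finset.sum_sub_distrib, ← Finset.mul_sum, ← Finset.mul_sum,
            hsw]
          ring

lemma F_one (β : Fin n → ℝ) (t : ℕ) :
    ∑ k : Fin p, ∑ j : Fin p,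
        (if p + t ≤ (k:ℕ) + n then dd p n β j * Complex.normSq ((1 : Matrix (Fin p) (Fin p) ℂ) k j) else 0) =
      ∑ j : Fin p, (if p + t ≤ (j:ℕ) + n then dd p n β j else 0) := by
  refine Finset.sum_congr rfl fun k _ => ?_
  by_cases h : p + t ≤ (k:ℕ) + n
  · simp only [if_pos h, Matrix.one_apply]
    rw [Finset.sum_eq_single k]
    · simp
    · intro b _ hb
      simp [Ne.symm hb]
    · simp
  · simp [h]

lemma diff_eq (hnp : n ≤ p) (β : Fin n → ℝ) (i : Fin n) :
    (∑ j : Fin p, (if p + (i:ℕ) ≤ (j:ℕ) + n then dd p n β j else 0)) -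
      (∑ j : Fin p, (if p + ((i:ℕ) + 1) ≤ (j:ℕ) + n then dd p n β j else 0)) = β i ^ 2 := by
  rw [← Finset.sum_sub_distrib]
  have hj0 : p + (i:ℕ) - n < p := by have := i.isLt; omega
  rw [Finset.sum_eq_single (⟨p + (i:ℕ) - n, hj0⟩ : Fin p)]
  · have h1 : p + (i:ℕ) ≤ (p + (i:ℕ) - n) + n := by have := i.isLt; omega
    have h2 : ¬ (p + ((i:ℕ) + 1) ≤ (p + (i:ℕ) - n) + n) := by have := i.isLt; omega
    rw [if_pos h1, if_neg h2, sub_zero]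
    have hp : p ≤ (p + (i:ℕ) - n) + n := by have := i.isLt; omega
    simp only [dd, dif_pos hp]
    congr 1
    congr 1
    apply Fin.ext
    show p + (i:ℕ) - n + n - p = (i:ℕ)
    omega
  · intro j _ hj
    by_cases h1 : p + (i:ℕ) ≤ (j:ℕ) + n
    · have h2 : p + ((i:ℕ) + 1) ≤ (j:ℕ) + n := by
        rcases Nat.lt_or_ge (p + (i:ℕ)) ((j:ℕ) + n) with h | h
        · omega
        · exact absurd (Fin.ext (show (j:ℕ) = p + (i:ℕ) - n by omega)) hj
      rw [if_pos h1, if_pos h2, sub_self]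
    · have h2 : ¬ (p + ((i:ℕ) + 1) ≤ (j:ℕ) + n) := by omega
      rw [if_neg h1, if_neg h2, sub_self]
  · simp


set_option maxHeartbeats 1000000 in
theorem stmt1
    {m p n : ℕ} (hnp : n ≤ p)
    (A : Matrix (Fin m) (Fin n) ℂ) (B : Matrix (Fin p) (Fin n) ℂ)
    (hrank : (Matrix.fromRows A B).rank = n)
    (V : Matrix (Fin p) (Fin p) ℂ) (hV : V ∈ Matrix.unitaryGroup (Fin p) ℂ)
    (R : Matrix (Fin n) (Fin n) ℂ) (hR : IsUnit R.det)
    (β : Fin n → ℝ)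
    (hβ0 : ∀ k, 0 ≤ β k) (hβ1 : ∀ k, β k ≤ 1) (hmono : Monotone β)
    (hB : B = V * (Matrix.of fun (k : Fin p) (l : Fin n) =>
        if (k : ℕ) + n = p + (l : ℕ) then Complex.ofReal (β l) else 0) * R)
    (hAA : Aᴴ * A = Rᴴ * Matrix.diagonal (fun l => Complex.ofReal (1 - β l ^ 2)) * R)
    (i : Fin n) :
    β i ^ 2 =
(⨆ Φ : Matrix.unitaryGroup (Fin p) ℂ,
      (Matrix.trace (Bᴴ * (Φ : Matrix (Fin p) (Fin p) ℂ)ᴴ *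
        Matrix.diagonal (fun k : Fin p => if p + (i : ℕ) ≤ (k : ℕ) + n then (1 : ℂ) else 0) *
        (Φ : Matrix (Fin p) (Fin p) ℂ) * B * (Aᴴ * A + Bᴴ * B)⁻¹)).re) -
(⨆ Φ : Matrix.unitaryGroup (Fin p) ℂ,
      (Matrix.trace (Bᴴ * (Φ : Matrix (Fin p) (Fin p) ℂ)ᴴ *
        Matrix.diagonal (fun k : Fin p => if p + (i : ℕ) + 1 ≤ (k : ℕ) + n then (1 : ℂ) else 0) *
        (Φ : Matrix (Fin p) (Fin p) ℂ) * B * (Aᴴ * A + Bᴴ * B)⁻¹)).re) := by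
  haveI : Nonempty (Matrix.unitaryGroup (Fin p) ℂ) := ⟨1⟩
  have hsup : ∀ t : ℕ, t ≤ n →
      (⨆ Φ : Matrix.unitaryGroup (Fin p) ℂ,
        (Matrix.trace (Bᴴ * (Φ : Matrix (Fin p) (Fin p) ℂ)ᴴ *
          Matrix.diagonal (fun k : Fin p => if p + t ≤ (k : ℕ) + n then (1 : ℂ) else 0) *
          (Φ : Matrix (Fin p) (Fin p) ℂ) * B * (Aᴴ * A + Bᴴ * B)⁻¹)).re) =
      ∑ j : Fin p, (if p + t ≤ (j:ℕ) + n then dd p n β j else 0) := by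
    intro t ht
    have hb : BddAbove (Set.range fun Φ : Matrix.unitaryGroup (Fin p) ℂ =>
        (Matrix.trace (Bᴴ * (Φ : Matrix (Fin p) (Fin p) ℂ)ᴴ *
          Matrix.diagonal (fun k : Fin p => if p + t ≤ (k : ℕ) + n then (1 : ℂ) else 0) *
          (Φ : Matrix (Fin p) (Fin p) ℂ) * B * (Aᴴ * A + Bᴴ * B)⁻¹)).re) := by
      refine ⟨∑ j : Fin p, (if p + t ≤ (j:ℕ) + n then dd p n β j else 0), ?_⟩
      rintro x ⟨Φ, rfl⟩
      dsimp only
      have h := trace_eq hnp A B V hV R hR β hB hAA t (Φ : Matrix (Fin p) (Fin p) ℂ)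
      rw [h]
      exact F_le hnp β hβ0 hmono t ht ((Φ : Matrix (Fin p) (Fin p) ℂ) * V) (mul_mem Φ.2 hV)
    apply le_antisymm
    · apply ciSup_le
      intro Φ
      have h := trace_eq hnp A B V hV R hR β hB hAA t (Φ : Matrix (Fin p) (Fin p) ℂ)
      rw [h]
      exact F_le hnp β hβ0 hmono t ht ((Φ : Matrix (Fin p) (Fin p) ℂ) * V) (mul_mem Φ.2 hV)
    · have hmem : star V ∈ Matrix.unitaryGroup (Fin p) ℂ := Unitary.star_mem hV
      refine le_ciSup_of_le hb ⟨star V, hmem⟩ ?_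
      dsimp only
      have h := trace_eq hnp A B V hV R hR β hB hAA t
        ((⟨star V, hmem⟩ : Matrix.unitaryGroup (Fin p) ℂ) : Matrix (Fin p) (Fin p) ℂ)
      rw [h]
      have h1 : ((⟨star V, hmem⟩ : Matrix.unitaryGroup (Fin p) ℂ) :
          Matrix (Fin p) (Fin p) ℂ) * V = 1 := hV.1
      rw [h1]
      exact (F_one β t).ge
  rw [hsup (i : ℕ) i.isLt.le]
  simp only [Nat.add_assoc p (i : ℕ) 1]
  rw [hsup ((i : ℕ) + 1) (by have := i.isLt; omega)]
  exact (diff_eq hnp β i).symm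
end

section
/- Let m ≤ n and let {A,B} be an (m,p,n)-GMP with GSVD as in the context, with generalized singular values (αᵢ, βᵢ); in particular α_{m+1} = ⋯ = αₙ = 0. Then for every 1 ≤ i ≤ m, αᵢ² equals the difference of maxima: αᵢ² = max_{Ψ ∈ 𝕌_m} Re tr(Aᴴ Ψᴴ 𝒬_i Ψ A (AᴴA + BᴴB)^{-1}) − max_{Ψ ∈ 𝕌_m} Re tr(Aᴴ Ψᴴ 𝒬_{i-1} Ψ A (AᴴA + BᴴB)^{-1}). -/
open Matrix BigOperators
open scoped ComplexOrder

private lemma sum_bound' {m : ℕ} (j : ℕ) (c d : Fin m → ℝ)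
    (hc0 : ∀ l, 0 ≤ c l) (hc1 : ∀ l, c l ≤ 1)
    (hcs : ∑ l : Fin m, c l = ∑ l : Fin m, (if (l:ℕ) < j then (1:ℝ) else 0))
    (hd0 : ∀ l, 0 ≤ d l) (hd : Antitone d) :
    ∑ l : Fin m, c l * d l ≤ ∑ l : Fin m, (if (l:ℕ) < j then (1:ℝ) else 0) * d l := by
  set t : ℝ := if h : j < m then d ⟨j, h⟩ else 0 with ht
  have key : ∀ l : Fin m, (c l - (if (l:ℕ) < j then (1:ℝ) else 0)) * d l
      ≤ (c l - (if (l:ℕ) < j then (1:ℝ) else 0)) * t := by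
    intro l
    by_cases hl : (l:ℕ) < j
    · simp only [hl, if_true]
      have hcl : c l - 1 ≤ 0 := by linarith [hc1 l]
      have htd : t ≤ d l := by
        by_cases h : j < m
        · simp only [ht, h, dif_pos]
          exact hd (by simp [Fin.le_def]; omega)
        · simp only [ht, h, dif_neg, not_false_iff]
          exact hd0 l
      nlinarith
    · simp only [hl, if_false]
      have h : j < m := lt_of_le_of_lt (not_lt.1 hl) l.isLt
      have htd : d l ≤ t := by
        simp only [ht, h, dif_pos]
        exact hd (by simp [Fin.le_def]; omega)
      nlinarith [hc0 l]
  have h2 := Finset.sum_le_sum (fun l (_ : l ∈ Finset.univ) => key l)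
  simp only [sub_mul] at h2
  rw [Finset.sum_sub_distrib, Finset.sum_sub_distrib, ← Finset.sum_mul, ← Finset.sum_mul, hcs] at h2
  linarith

private lemma trace_expand' {m : ℕ} (j : ℕ) (d : Fin m → ℝ) (Ψ : Matrix (Fin m) (Fin m) ℂ) :
    (Matrix.trace (Matrix.diagonal (fun k : Fin m => if (k:ℕ) < j then (1:ℂ) else 0) * Ψ *
      Matrix.diagonal (fun k : Fin m => (d k : ℂ)) * Ψᴴ)).re
    = ∑ l : Fin m, (∑ k : Fin m, (if (k:ℕ) < j then (1:ℝ) else 0) * Complex.normSq (Ψ k l)) * d l := by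
  have e1 : ∀ k : Fin m, (Matrix.diagonal (fun k : Fin m => if (k:ℕ) < j then (1:ℂ) else 0) * Ψ *
      Matrix.diagonal (fun k : Fin m => (d k : ℂ)) * Ψᴴ) k k
      = ∑ l : Fin m, (((if (k:ℕ) < j then (1:ℝ) else 0) * Complex.normSq (Ψ k l) * d l : ℝ) : ℂ) := by
    intro k
    rw [Matrix.mul_apply]
    refine Finset.sum_congr rfl fun l _ => ?_
    rw [Matrix.mul_diagonal, Matrix.diagonal_mul, Matrix.conjTranspose_apply]
    split_ifs with h
    · push_cast
      rw [one_mul, one_mul, mul_comm (Ψ k l) ((d l : ℂ)), mul_assoc, Complex.star_def,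
        Complex.mul_conj, mul_comm]
    · simp
  rw [Matrix.trace, Complex.re_sum]
  calc ∑ k : Fin m, ((Matrix.diagonal (fun k : Fin m => if (k:ℕ) < j then (1:ℂ) else 0) * Ψ *
          Matrix.diagonal (fun k : Fin m => (d k : ℂ)) * Ψᴴ).diag k).re
      = ∑ k : Fin m, ∑ l : Fin m,
          (if (k:ℕ) < j then (1:ℝ) else 0) * Complex.normSq (Ψ k l) * d l := by
        refine Finset.sum_congr rfl fun k _ => ?_
        rw [Matrix.diag_apply, e1, Complex.re_sum]
        simp
    _ = ∑ l : Fin m, ∑ k : Fin m,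
          (if (k:ℕ) < j then (1:ℝ) else 0) * Complex.normSq (Ψ k l) * d l := Finset.sum_comm
    _ = ∑ l : Fin m, (∑ k : Fin m, (if (k:ℕ) < j then (1:ℝ) else 0) * Complex.normSq (Ψ k l)) * d l := by
        refine Finset.sum_congr rfl fun l _ => (Finset.sum_mul _ _ _).symm

/-- rows and columns of a unitary matrix have unit normSq sums -/
private lemma unitary_col_sum {m : ℕ} {Ψ : Matrix (Fin m) (Fin m) ℂ}
    (hΨ : Ψ ∈ Matrix.unitaryGroup (Fin m) ℂ) (l : Fin m) :
    ∑ k : Fin m, Complex.normSq (Ψ k l) = 1 := by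
  have h1 := Matrix.mem_unitaryGroup_iff'.mp hΨ
  have h2 := congrFun (congrFun h1 l) l
  rw [Matrix.mul_apply, Matrix.one_apply_eq] at h2
  have h3 : ∑ k : Fin m, ((Complex.normSq (Ψ k l) : ℝ) : ℂ) = 1 := by
    rw [← h2]
    refine Finset.sum_congr rfl fun k _ => ?_
    rw [Matrix.star_apply, Complex.star_def, mul_comm, Complex.mul_conj]
  exact_mod_cast h3

private lemma unitary_row_sum {m : ℕ} {Ψ : Matrix (Fin m) (Fin m) ℂ}
    (hΨ : Ψ ∈ Matrix.unitaryGroup (Fin m) ℂ) (k : Fin m) :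
    ∑ l : Fin m, Complex.normSq (Ψ k l) = 1 := by
  have h1 := Matrix.mem_unitaryGroup_iff.mp hΨ
  have h2 := congrFun (congrFun h1 k) k
  rw [Matrix.mul_apply, Matrix.one_apply_eq] at h2
  have h3 : ∑ l : Fin m, ((Complex.normSq (Ψ k l) : ℝ) : ℂ) = 1 := by
    rw [← h2]
    refine Finset.sum_congr rfl fun l _ => ?_
    rw [Matrix.star_apply, Complex.star_def, Complex.mul_conj]
  exact_mod_cast h3

/-- The Ky Fan type bound for the trace expression. -/
private lemma trace_le' {m : ℕ} (j : ℕ) (d : Fin m → ℝ)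
    (hd0 : ∀ l, 0 ≤ d l) (hd : Antitone d)
    {Ψ : Matrix (Fin m) (Fin m) ℂ} (hΨ : Ψ ∈ Matrix.unitaryGroup (Fin m) ℂ) :
    (Matrix.trace (Matrix.diagonal (fun k : Fin m => if (k:ℕ) < j then (1:ℂ) else 0) * Ψ *
      Matrix.diagonal (fun k : Fin m => (d k : ℂ)) * Ψᴴ)).re
    ≤ ∑ l : Fin m, (if (l:ℕ) < j then (1:ℝ) else 0) * d l := by
  rw [trace_expand']
  refine sum_bound' j _ d (fun l => ?_) (fun l => ?_) ?_ hd0 hd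
  · refine Finset.sum_nonneg fun k _ => ?_
    split_ifs <;> simp [Complex.normSq_nonneg]
  · calc ∑ k : Fin m, (if (k:ℕ) < j then (1:ℝ) else 0) * Complex.normSq (Ψ k l)
        ≤ ∑ k : Fin m, Complex.normSq (Ψ k l) := by
          refine Finset.sum_le_sum fun k _ => ?_
          split_ifs <;> simp [Complex.normSq_nonneg]
      _ = 1 := unitary_col_sum hΨ l
  · rw [Finset.sum_comm]
    refine Finset.sum_congr rfl fun k _ => ?_
    rw [← Finset.mul_sum, unitary_row_sum hΨ k, mul_one]

private lemma trace_eq_one' {m : ℕ} (j : ℕ) (d : Fin m → ℝ) :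
    (Matrix.trace (Matrix.diagonal (fun k : Fin m => if (k:ℕ) < j then (1:ℂ) else 0) *
      (1 : Matrix (Fin m) (Fin m) ℂ) *
      Matrix.diagonal (fun k : Fin m => (d k : ℂ)) * (1 : Matrix (Fin m) (Fin m) ℂ)ᴴ)).re
    = ∑ l : Fin m, (if (l:ℕ) < j then (1:ℝ) else 0) * d l := by
  rw [trace_expand']
  refine Finset.sum_congr rfl fun l _ => ?_
  congr 1
  rw [Finset.sum_eq_single l]
  · simp
  · intro k _ hkl
    simp [Matrix.one_apply_ne hkl]
  · simp

private lemma sup_eq' {m : ℕ} (j : ℕ) (d : Fin m → ℝ)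
    (hd0 : ∀ l, 0 ≤ d l) (hd : Antitone d)
    {U : Matrix (Fin m) (Fin m) ℂ} (hU : U ∈ Matrix.unitaryGroup (Fin m) ℂ)
    (g : Matrix.unitaryGroup (Fin m) ℂ → ℝ)
    (hg : ∀ Φ : Matrix.unitaryGroup (Fin m) ℂ,
      g Φ = (Matrix.trace (Matrix.diagonal (fun k : Fin m => if (k:ℕ) < j then (1:ℂ) else 0) *
        ((Φ : Matrix (Fin m) (Fin m) ℂ) * U) * Matrix.diagonal (fun k : Fin m => (d k : ℂ)) *
        ((Φ : Matrix (Fin m) (Fin m) ℂ) * U)ᴴ)).re) :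
    (⨆ Φ, g Φ) = ∑ l : Fin m, (if (l:ℕ) < j then (1:ℝ) else 0) * d l := by
  haveI : Nonempty (Matrix.unitaryGroup (Fin m) ℂ) := ⟨1⟩
  have hb : ∀ Φ : Matrix.unitaryGroup (Fin m) ℂ,
      g Φ ≤ ∑ l : Fin m, (if (l:ℕ) < j then (1:ℝ) else 0) * d l := by
    intro Φ
    rw [hg]
    exact trace_le' j d hd0 hd (mul_mem Φ.2 hU)
  have hΦ₀mem : star U ∈ Matrix.unitaryGroup (Fin m) ℂ := Unitary.star_mem hU
  have hval : g ⟨star U, hΦ₀mem⟩ = ∑ l : Fin m, (if (l:ℕ) < j then (1:ℝ) else 0) * d l := by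
    rw [hg]
    have h1 : (star U : Matrix (Fin m) (Fin m) ℂ) * U = 1 :=
      Matrix.mem_unitaryGroup_iff'.mp hU
    rw [show ((⟨star U, hΦ₀mem⟩ : Matrix.unitaryGroup (Fin m) ℂ) : Matrix (Fin m) (Fin m) ℂ)
        = star U from rfl, h1]
    exact trace_eq_one' j d
  refine le_antisymm (ciSup_le hb) ?_
  calc ∑ l : Fin m, (if (l:ℕ) < j then (1:ℝ) else 0) * d l
      = g ⟨star U, hΦ₀mem⟩ := hval.symm
    _ ≤ ⨆ Φ, g Φ := le_ciSup ⟨_, by rintro x ⟨Φ, rfl⟩; exact hb Φ⟩ _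

theorem stmt2
    {m p n : ℕ} (hmn : m ≤ n)
    (A : Matrix (Fin m) (Fin n) ℂ) (B : Matrix (Fin p) (Fin n) ℂ)
    (hrank : (Matrix.fromRows A B).rank = n)
    (U : Matrix (Fin m) (Fin m) ℂ) (hU : U ∈ Matrix.unitaryGroup (Fin m) ℂ)
    (R : Matrix (Fin n) (Fin n) ℂ) (hR : IsUnit R.det)
    (α : Fin n → ℝ)
    (hα0 : ∀ k, 0 ≤ α k) (hα1 : ∀ k, α k ≤ 1) (hmono : Antitone α)
    (hzero : ∀ k : Fin n, m ≤ (k : ℕ) → α k = 0)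
    (hA : A = U * (Matrix.of fun (k : Fin m) (l : Fin n) =>
        if (k : ℕ) = (l : ℕ) then Complex.ofReal (α l) else 0) * R)
    (hBB : Bᴴ * B = Rᴴ * Matrix.diagonal (fun l => Complex.ofReal (1 - α l ^ 2)) * R)
    (i : Fin n) (him : (i : ℕ) < m) :
    α i ^ 2 =
(⨆ Φ : Matrix.unitaryGroup (Fin m) ℂ,
      (Matrix.trace (Aᴴ * (Φ : Matrix (Fin m) (Fin m) ℂ)ᴴ *
        Matrix.diagonal (fun k : Fin m => if (k : ℕ) ≤ (i : ℕ) then (1 : ℂ) else 0) *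
        (Φ : Matrix (Fin m) (Fin m) ℂ) * A * (Aᴴ * A + Bᴴ * B)⁻¹)).re) -
(⨆ Φ : Matrix.unitaryGroup (Fin m) ℂ,
      (Matrix.trace (Aᴴ * (Φ : Matrix (Fin m) (Fin m) ℂ)ᴴ *
        Matrix.diagonal (fun k : Fin m => if (k : ℕ) < (i : ℕ) then (1 : ℂ) else 0) *
        (Φ : Matrix (Fin m) (Fin m) ℂ) * A * (Aᴴ * A + Bᴴ * B)⁻¹)).re) := by
  classical
  set Sg : Matrix (Fin m) (Fin n) ℂ := Matrix.of fun (k : Fin m) (l : Fin n) =>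
    if (k : ℕ) = (l : ℕ) then Complex.ofReal (α l) else 0 with hSg
  set d : Fin m → ℝ := fun k => α (Fin.castLE hmn k) ^ 2 with hdd
  have hd0 : ∀ k, 0 ≤ d k := fun k => sq_nonneg _
  have hdmono : Antitone d := by
    intro k k' hkk'
    have : α (Fin.castLE hmn k') ≤ α (Fin.castLE hmn k) :=
      hmono (Fin.le_def.mpr (Fin.le_def.mp hkk'))
    exact pow_le_pow_left₀ (hα0 _) this 2
  -- Sgᴴ * Sg
  have hSS : Sgᴴ * Sg = Matrix.diagonal (fun l : Fin n => ((α l : ℂ))^2) := by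
    ext l l'
    rw [Matrix.mul_apply]
    by_cases hll : l = l'
    · subst hll
      rw [Matrix.diagonal_apply_eq]
      by_cases hlm : (l : ℕ) < m
      · rw [Finset.sum_eq_single (⟨(l : ℕ), hlm⟩ : Fin m)]
        · simp [hSg, Matrix.conjTranspose_apply, sq]
        · intro k _ hk
          have : (k : ℕ) ≠ (l : ℕ) := fun h => hk (Fin.ext h)
          simp [hSg, Matrix.conjTranspose_apply, this]
        · simp
      · have hz : α l = 0 := hzero l (not_lt.1 hlm)
        have : ∀ k : Fin m, (k : ℕ) ≠ (l : ℕ) := fun k h => hlm (h ▸ k.isLt)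
        simp [hSg, Matrix.conjTranspose_apply, this, hz]
    · rw [Matrix.diagonal_apply_ne _ hll]
      have hvl : (l : ℕ) ≠ (l' : ℕ) := fun h => hll (Fin.ext h)
      refine Finset.sum_eq_zero fun k _ => ?_
      simp only [hSg, Matrix.conjTranspose_apply, Matrix.of_apply]
      by_cases h1 : (k : ℕ) = (l : ℕ)
      · have h2 : (k : ℕ) ≠ (l' : ℕ) := h1 ▸ hvl
        simp [h2]
      · simp [h1]
  -- Sg * Sgᴴ
  have hSSt : Sg * Sgᴴ = Matrix.diagonal (fun k : Fin m => ((d k : ℝ) : ℂ)) := by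
    ext k k'
    rw [Matrix.mul_apply]
    by_cases hkk : k = k'
    · subst hkk
      rw [Matrix.diagonal_apply_eq]
      rw [Finset.sum_eq_single (Fin.castLE hmn k)]
      · simp [hSg, Matrix.conjTranspose_apply, hdd, sq, Fin.castLE]
      · intro l _ hl
        have : (k : ℕ) ≠ (l : ℕ) := fun h => hl (Fin.ext h.symm)
        simp [hSg, Matrix.conjTranspose_apply, this]
      · simp
    · rw [Matrix.diagonal_apply_ne _ hkk]
      have hvk : (k : ℕ) ≠ (k' : ℕ) := fun h => hkk (Fin.ext h)
      refine Finset.sum_eq_zero fun l _ => ?_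
      simp only [hSg, Matrix.conjTranspose_apply, Matrix.of_apply]
      by_cases h1 : (k : ℕ) = (l : ℕ)
      · have h2 : (k' : ℕ) ≠ (l : ℕ) := fun h => hvk (h1.trans h.symm)
        simp [h2]
      · simp [h1]
  have hUU : Uᴴ * U = 1 := by
    have := Matrix.mem_unitaryGroup_iff'.mp hU
    rwa [Matrix.star_eq_conjTranspose] at this
  have hAA : Aᴴ * A = Rᴴ * Matrix.diagonal (fun l : Fin n => ((α l : ℂ))^2) * R := by
    rw [hA]
    calc (U * Sg * R)ᴴ * (U * Sg * R)
        = Rᴴ * (Sgᴴ * ((Uᴴ * U) * (Sg * R))) := by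
          simp only [Matrix.conjTranspose_mul, Matrix.mul_assoc]
      _ = Rᴴ * (Sgᴴ * (Sg * R)) := by rw [hUU, Matrix.one_mul]
      _ = Rᴴ * Matrix.diagonal (fun l : Fin n => ((α l : ℂ))^2) * R := by
          rw [show Sgᴴ * (Sg * R) = Matrix.diagonal (fun l : Fin n => ((α l : ℂ))^2) * R by
            rw [← Matrix.mul_assoc, hSS], ← Matrix.mul_assoc]
  have hM : Aᴴ * A + Bᴴ * B = Rᴴ * R := by
    rw [hAA, hBB, ← Matrix.add_mul, ← Matrix.mul_add]
    have : Matrix.diagonal (fun l : Fin n => ((α l : ℂ))^2) +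
        Matrix.diagonal (fun l : Fin n => Complex.ofReal (1 - α l ^ 2)) = 1 := by
      rw [Matrix.diagonal_add, ← Matrix.diagonal_one]
      congr 1
      funext l
      push_cast
      ring
    rw [this, Matrix.mul_one]
  have hRdet' : IsUnit Rᴴ.det := by
    rw [Matrix.det_conjTranspose]
    exact hR.star
  have hAMA : A * (Aᴴ * A + Bᴴ * B)⁻¹ * Aᴴ
      = U * Matrix.diagonal (fun k : Fin m => ((d k : ℝ) : ℂ)) * Uᴴ := by
    rw [hM, Matrix.mul_inv_rev, hA]
    calc (U * Sg * R) * (R⁻¹ * (Rᴴ)⁻¹) * (U * Sg * R)ᴴ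
        = U * (Sg * (R * (R⁻¹ * ((Rᴴ)⁻¹ * (Rᴴ * (Sgᴴ * Uᴴ)))))) := by
          simp only [Matrix.conjTranspose_mul, Matrix.mul_assoc]
      _ = U * (Sg * (Sgᴴ * Uᴴ)) := by
          rw [← Matrix.mul_assoc (Rᴴ)⁻¹, Matrix.nonsing_inv_mul _ hRdet', Matrix.one_mul,
            ← Matrix.mul_assoc R, Matrix.mul_nonsing_inv _ hR, Matrix.one_mul]
      _ = U * Matrix.diagonal (fun k : Fin m => ((d k : ℝ) : ℂ)) * Uᴴ := by
          rw [show Sg * (Sgᴴ * Uᴴ) = Matrix.diagonal (fun k : Fin m => ((d k : ℝ) : ℂ)) * Uᴴ by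
            rw [← Matrix.mul_assoc, hSSt], ← Matrix.mul_assoc]
  -- the trace identity
  have key : ∀ (j : ℕ) (Φ : Matrix (Fin m) (Fin m) ℂ),
      Matrix.trace (Aᴴ * Φᴴ *
        Matrix.diagonal (fun k : Fin m => if (k : ℕ) < j then (1 : ℂ) else 0) *
        Φ * A * (Aᴴ * A + Bᴴ * B)⁻¹)
      = Matrix.trace (Matrix.diagonal (fun k : Fin m => if (k : ℕ) < j then (1 : ℂ) else 0) *
          (Φ * U) * Matrix.diagonal (fun k : Fin m => ((d k : ℝ) : ℂ)) * (Φ * U)ᴴ) := by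
    intro j Φ
    set Q := Matrix.diagonal (fun k : Fin m => if (k : ℕ) < j then (1 : ℂ) else 0) with hQdef
    calc Matrix.trace (Aᴴ * Φᴴ * Q * Φ * A * (Aᴴ * A + Bᴴ * B)⁻¹)
        = Matrix.trace (Aᴴ * (Φᴴ * (Q * (Φ * (A * (Aᴴ * A + Bᴴ * B)⁻¹))))) := by
          congr 1
          simp only [Matrix.mul_assoc]
      _ = Matrix.trace ((Φᴴ * (Q * (Φ * (A * (Aᴴ * A + Bᴴ * B)⁻¹)))) * Aᴴ) :=
          Matrix.trace_mul_comm _ _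
      _ = Matrix.trace (Φᴴ * (Q * (Φ * (A * (Aᴴ * A + Bᴴ * B)⁻¹ * Aᴴ)))) := by
          congr 1
          simp only [Matrix.mul_assoc]
      _ = Matrix.trace ((Q * (Φ * (A * (Aᴴ * A + Bᴴ * B)⁻¹ * Aᴴ))) * Φᴴ) :=
          Matrix.trace_mul_comm _ _
      _ = Matrix.trace (Q * (Φ * U) * Matrix.diagonal (fun k : Fin m => ((d k : ℝ) : ℂ)) *
            (Φ * U)ᴴ) := by
          rw [hAMA]
          congr 1
          simp only [Matrix.conjTranspose_mul, Matrix.mul_assoc]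
  have h1 : (⨆ Φ : Matrix.unitaryGroup (Fin m) ℂ,
      (Matrix.trace (Aᴴ * (Φ : Matrix (Fin m) (Fin m) ℂ)ᴴ *
        Matrix.diagonal (fun k : Fin m => if (k : ℕ) < (i : ℕ) + 1 then (1 : ℂ) else 0) *
        (Φ : Matrix (Fin m) (Fin m) ℂ) * A * (Aᴴ * A + Bᴴ * B)⁻¹)).re)
      = ∑ l : Fin m, (if (l:ℕ) < (i : ℕ) + 1 then (1:ℝ) else 0) * d l := by
    refine sup_eq' ((i : ℕ) + 1) d hd0 hdmono hU _ fun Φ => ?_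
    rw [key ((i : ℕ) + 1) (Φ : Matrix (Fin m) (Fin m) ℂ)]
  have h2 : (⨆ Φ : Matrix.unitaryGroup (Fin m) ℂ,
      (Matrix.trace (Aᴴ * (Φ : Matrix (Fin m) (Fin m) ℂ)ᴴ *
        Matrix.diagonal (fun k : Fin m => if (k : ℕ) < (i : ℕ) then (1 : ℂ) else 0) *
        (Φ : Matrix (Fin m) (Fin m) ℂ) * A * (Aᴴ * A + Bᴴ * B)⁻¹)).re)
      = ∑ l : Fin m, (if (l:ℕ) < (i : ℕ) then (1:ℝ) else 0) * d l := by
    refine sup_eq' (i : ℕ) d hd0 hdmono hU _ fun Φ => ?_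
    rw [key (i : ℕ) (Φ : Matrix (Fin m) (Fin m) ℂ)]
  have hQle : (fun k : Fin m => if (k : ℕ) ≤ (i : ℕ) then (1 : ℂ) else 0)
      = (fun k : Fin m => if (k : ℕ) < (i : ℕ) + 1 then (1 : ℂ) else 0) := by
    funext k
    simp [Nat.lt_succ_iff]
  rw [hQle, h1, h2, ← Finset.sum_sub_distrib]
  rw [Finset.sum_eq_single (⟨(i : ℕ), him⟩ : Fin m)]
  · simp only [hdd]
    have : Fin.castLE hmn (⟨(i : ℕ), him⟩ : Fin m) = i := Fin.ext rfl
    rw [this]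
    norm_num
  · intro l _ hl
    have hv : (l : ℕ) ≠ (i : ℕ) := fun h => hl (Fin.ext h)
    by_cases h : (l : ℕ) < (i : ℕ)
    · have : (l : ℕ) < (i : ℕ) + 1 := by omega
      simp [h, this]
    · have : ¬ (l : ℕ) < (i : ℕ) + 1 := by omega
      simp [h, this]
  · simp
end

section
/- Let n ≤ m and let {A,B} be an (m,p,n)-GMP with GSVD as in the context, with generalized singular values (αᵢ, βᵢ). Then for every 1 ≤ i ≤ n, αᵢ equals the difference of maxima: αᵢ = max_{Π₁ ∈ 𝕌_m, Π₂ ∈ 𝕌_n} |tr(Π₁ A (AᴴA + BᴴB)^{-1/2} Π₂ 𝒢_i)| − max_{Π₁ ∈ 𝕌_m, Π₂ ∈ 𝕌_n} |tr(Π₁ A (AᴴA + BᴴB)^{-1/2} Π₂ 𝒢_{i-1})|. -/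
open Matrix BigOperators
open scoped ComplexOrder
open Finset


lemma range_filter_le (j k : ℕ) : (Finset.range j).filter (· ≤ k) = Finset.range (min j (k+1)) := by
  ext x; simp [Nat.lt_succ_iff, lt_min_iff]

lemma core_sum (n M : ℕ) (hMn : M ≤ n) (β : ℕ → ℝ)
    (hmono : Antitone β) (hβn : β n = 0)
    (cc : ℕ → ℕ → ℝ) (h0 : ∀ l a, 0 ≤ cc l a)
    (hrow : ∀ l, ∑ a ∈ Finset.range n, cc l a ≤ 1)
    (hcol : ∀ a, ∑ l ∈ Finset.range n, cc l a ≤ 1) :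
    ∑ l ∈ Finset.range M, ∑ a ∈ Finset.range n, β a * cc l a
      ≤ ∑ l ∈ Finset.range M, β l := by
  set d : ℕ → ℝ := fun k => β k - β (k+1) with hd
  have hd0 : ∀ k, 0 ≤ d k := fun k => sub_nonneg.2 (hmono (Nat.le_succ k))
  have key : ∀ a, a ≤ n → β a = ∑ k ∈ Finset.range n, (if a ≤ k then d k else 0) := by
    intro a ha
    rw [Finset.sum_ite, Finset.sum_const_zero, add_zero]
    have : (Finset.range n).filter (a ≤ ·) = Finset.Ico a n := by
      ext x; simp [Nat.lt_succ_iff, and_comm]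
    rw [this, Finset.sum_Ico_eq_sub d ha, Finset.sum_range_sub' β, Finset.sum_range_sub' β, hβn]
    ring
  have S : ℕ → ℝ := fun k => ∑ l ∈ Finset.range M, ∑ a ∈ Finset.range n,
      (if a ≤ k then cc l a else 0)
  have lhs_eq : ∑ l ∈ Finset.range M, ∑ a ∈ Finset.range n, β a * cc l a
      = ∑ k ∈ Finset.range n, d k * (∑ l ∈ Finset.range M, ∑ a ∈ Finset.range n,
          (if a ≤ k then cc l a else 0)) := by
    have h1 : ∀ l ∈ Finset.range M, ∑ a ∈ Finset.range n, β a * cc l a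
        = ∑ k ∈ Finset.range n, ∑ a ∈ Finset.range n, (if a ≤ k then d k * cc l a else 0) := by
      intro l _
      rw [Finset.sum_comm]
      refine Finset.sum_congr rfl fun a ha => ?_
      rw [key a (Nat.le_of_lt (Finset.mem_range.1 ha)), Finset.sum_mul]
      exact Finset.sum_congr rfl fun k _ => by split <;> simp
    rw [Finset.sum_congr rfl h1, Finset.sum_comm]
    refine Finset.sum_congr rfl fun k _ => ?_
    rw [Finset.mul_sum]
    refine Finset.sum_congr rfl fun l _ => ?_
    rw [Finset.mul_sum]
    exact Finset.sum_congr rfl fun a _ => by split <;> simp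
  have rhs_eq : ∑ l ∈ Finset.range M, β l
      = ∑ k ∈ Finset.range n, d k * ((min M (k+1) : ℕ) : ℝ) := by
    have h1 : ∀ l ∈ Finset.range M, β l
        = ∑ k ∈ Finset.range n, (if l ≤ k then d k else 0) := fun l hl =>
      key l (le_trans (Nat.le_of_lt (Finset.mem_range.1 hl)) hMn)
    rw [Finset.sum_congr rfl h1, Finset.sum_comm]
    refine Finset.sum_congr rfl fun k _ => ?_
    rw [Finset.sum_ite, Finset.sum_const_zero, add_zero, Finset.sum_const]
    have : (Finset.range M).filter (fun l => l ≤ k) = Finset.range (min M (k+1)) :=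
      range_filter_le M k
    rw [this, Finset.card_range, nsmul_eq_mul, mul_comm]
  rw [lhs_eq, rhs_eq]
  refine Finset.sum_le_sum fun k hk => ?_
  refine mul_le_mul_of_nonneg_left ?_ (hd0 k)
  have cast_min : ((min M (k+1) : ℕ) : ℝ) = min (M : ℝ) ((k+1 : ℕ) : ℝ) := Nat.cast_min M (k+1)
  rw [cast_min]
  refine le_min ?_ ?_
  · -- row bound
    calc ∑ l ∈ Finset.range M, ∑ a ∈ Finset.range n, (if a ≤ k then cc l a else 0)
        ≤ ∑ l ∈ Finset.range M, (1:ℝ) := by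
          refine Finset.sum_le_sum fun l _ => ?_
          refine le_trans (Finset.sum_le_sum fun a _ => ?_) (hrow l)
          split <;> simp [h0 l]
      _ = (M : ℝ) := by simp
  · -- column bound
    rw [Finset.sum_comm]
    calc ∑ a ∈ Finset.range n, ∑ l ∈ Finset.range M, (if a ≤ k then cc l a else 0)
        ≤ ∑ a ∈ Finset.range n, (if a ≤ k then (1:ℝ) else 0) := by
          refine Finset.sum_le_sum fun a _ => ?_
          by_cases h : a ≤ k
          · simp only [if_pos h]
            refine le_trans ?_ (hcol a)
            exact Finset.sum_le_sum_of_subset_of_nonneg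
              (Finset.range_subset_range.2 hMn) fun l _ _ => h0 l a
          · simp [h]
      _ ≤ ((k+1 : ℕ) : ℝ) := by
          rw [Finset.sum_ite, Finset.sum_const_zero, add_zero, Finset.sum_const,
            range_filter_le n k, Finset.card_range, nsmul_eq_mul, mul_one]
          exact Nat.cast_le.2 (Nat.min_le_right n (k+1))

lemma range_filter_lt (j c : ℕ) : (Finset.range j).filter (· < c) = Finset.range (min j c) := by
  ext x; simp [lt_min_iff]

def sigM (m : ℕ) {n : ℕ} (α : Fin n → ℝ) : Matrix (Fin m) (Fin n) ℂ :=
  Matrix.of fun k l => if (k : ℕ) = (l : ℕ) then Complex.ofReal (α l) else 0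

def gM (n m c : ℕ) : Matrix (Fin n) (Fin m) ℂ :=
  Matrix.of fun k l => if (k : ℕ) = (l : ℕ) ∧ (k : ℕ) < c then 1 else 0

lemma unitary_row_sum_s4 {k : ℕ} {V : Matrix (Fin k) (Fin k) ℂ}
    (hV : V ∈ Matrix.unitaryGroup (Fin k) ℂ) (r : Fin k) :
    ∑ c, ‖(V r c)‖ ^ 2 = 1 := by
  have h1 : (V * star V) r r = 1 := by
    rw [Matrix.mem_unitaryGroup_iff.1 hV]; simp [Matrix.one_apply]
  rw [Matrix.star_eq_conjTranspose, Matrix.mul_apply] at h1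
  have h2 : ∑ j, (Complex.ofReal (‖(V r j)‖ ^ 2)) = 1 := by
    refine Eq.trans (Finset.sum_congr rfl fun j _ => ?_) h1
    rw [Matrix.conjTranspose_apply, Complex.sq_norm]
    exact (Complex.mul_conj _).symm
  rw [← Complex.ofReal_sum] at h2
  exact_mod_cast h2

lemma unitary_col_sum_s4 {k : ℕ} {V : Matrix (Fin k) (Fin k) ℂ}
    (hV : V ∈ Matrix.unitaryGroup (Fin k) ℂ) (c : Fin k) :
    ∑ r, ‖(V r c)‖ ^ 2 = 1 := by
  have h1 : (star V * V) c c = 1 := by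
    rw [Matrix.mem_unitaryGroup_iff'.1 hV]; simp [Matrix.one_apply]
  rw [Matrix.star_eq_conjTranspose, Matrix.mul_apply] at h1
  have h2 : ∑ j, (Complex.ofReal (‖(V j c)‖ ^ 2)) = 1 := by
    refine Eq.trans (Finset.sum_congr rfl fun j _ => ?_) h1
    rw [Matrix.conjTranspose_apply, Complex.sq_norm, mul_comm]
    exact (Complex.mul_conj _).symm
  rw [← Complex.ofReal_sum] at h2
  exact_mod_cast h2

lemma sum_castLE_le {m n : ℕ} (hnm : n ≤ m) (f : Fin m → ℝ) (hf : ∀ t, 0 ≤ f t) :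
    ∑ a : Fin n, f (Fin.castLE hnm a) ≤ ∑ t : Fin m, f t := by
  have h1 : ∑ a : Fin n, f (Fin.castLE hnm a)
      = ∑ t ∈ Finset.univ.map (Fin.castLEEmb hnm), f t := by
    rw [Finset.sum_map]; rfl
  rw [h1]
  exact Finset.sum_le_sum_of_subset_of_nonneg (Finset.subset_univ _) fun t _ _ => hf t

lemma cs_sum_le_one {n : ℕ} (u v : Fin n → ℝ) (hu0 : ∀ a, 0 ≤ u a) (hv0 : ∀ a, 0 ≤ v a)
    (hu : ∑ a, u a ^ 2 ≤ 1) (hv : ∑ a, v a ^ 2 ≤ 1) : ∑ a, u a * v a ≤ 1 := by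
  have h := Finset.sum_mul_sq_le_sq_mul_sq Finset.univ u v
  have h2 : 0 ≤ ∑ a, u a * v a :=
    Finset.sum_nonneg fun a _ => mul_nonneg (hu0 a) (hv0 a)
  have h3 : (0:ℝ) ≤ ∑ a, u a ^ 2 := Finset.sum_nonneg fun a _ => sq_nonneg _
  have h4 : (0:ℝ) ≤ ∑ a, v a ^ 2 := Finset.sum_nonneg fun a _ => sq_nonneg _
  nlinarith

lemma trace_formula {m n : ℕ} (hnm : n ≤ m) (α : Fin n → ℝ)
    (V1 : Matrix (Fin m) (Fin m) ℂ) (V2 : Matrix (Fin n) (Fin n) ℂ) (c : ℕ) :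
    Matrix.trace (V1 * sigM m α * V2 * gM n m c)
      = ∑ l : Fin n, if (l : ℕ) < c then
          (∑ a : Fin n, V1 (Fin.castLE hnm l) (Fin.castLE hnm a) * (Complex.ofReal (α a)) * V2 a l)
        else 0 := by
  have hVS : ∀ (r : Fin m) (j : Fin n),
      (V1 * sigM m α) r j = V1 r (Fin.castLE hnm j) * Complex.ofReal (α j) := by
    intro r j
    rw [Matrix.mul_apply]
    rw [Finset.sum_eq_single (Fin.castLE hnm j)]
    · simp [sigM]
    · intro t _ ht
      have : (t : ℕ) ≠ (j : ℕ) := by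
        intro h; exact ht (Fin.ext (by simp [h]))
      simp [sigM, this]
    · simp
  rw [Matrix.trace_mul_comm]
  rw [Matrix.trace]
  refine Finset.sum_congr rfl fun l _ => ?_
  rw [Matrix.diag_apply, Matrix.mul_apply]
  rw [Finset.sum_eq_single (Fin.castLE hnm l)]
  · have hg : gM n m c l (Fin.castLE hnm l) = if (l : ℕ) < c then 1 else 0 := by
      simp [gM]
    rw [hg]
    split
    · rw [one_mul, Matrix.mul_apply]
      refine Finset.sum_congr rfl fun a _ => ?_
      rw [hVS]
    · rw [zero_mul]
  · intro s _ hs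
    have : (l : ℕ) ≠ (s : ℕ) := by
      intro h; exact hs (Fin.ext (by simp [← h]))
    simp [gM, this]
  · simp

lemma trace_bound {m n : ℕ} (hnm : n ≤ m) (α : Fin n → ℝ)
    (hα0 : ∀ k, 0 ≤ α k) (hα1 : ∀ k, α k ≤ 1) (hmono : Antitone α)
    {V1 : Matrix (Fin m) (Fin m) ℂ} {V2 : Matrix (Fin n) (Fin n) ℂ}
    (hV1 : V1 ∈ Matrix.unitaryGroup (Fin m) ℂ) (hV2 : V2 ∈ Matrix.unitaryGroup (Fin n) ℂ)
    (c : ℕ) :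
    ‖(Matrix.trace (V1 * sigM m α * V2 * gM n m c))‖
      ≤ ∑ l ∈ Finset.univ.filter (fun l : Fin n => (l : ℕ) < c), α l := by
  rw [trace_formula hnm α V1 V2 c]
  set cc : Fin n → Fin n → ℝ := fun l a =>
    ‖(V1 (Fin.castLE hnm l) (Fin.castLE hnm a))‖ * ‖(V2 a l)‖ with hcc
  have step1 : ‖(∑ l : Fin n, if (l : ℕ) < c then
        (∑ a : Fin n, V1 (Fin.castLE hnm l) (Fin.castLE hnm a) * (Complex.ofReal (α a)) * V2 a l)
      else 0)‖ ≤ ∑ l : Fin n, (if (l : ℕ) < c then ∑ a : Fin n, α a * cc l a else 0) := by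
    refine le_trans (norm_sum_le _ _) (Finset.sum_le_sum fun l _ => ?_)
    split
    · refine le_trans (norm_sum_le _ _) (Finset.sum_le_sum fun a _ => ?_)
      rw [norm_mul, norm_mul, Complex.norm_real, Real.norm_of_nonneg (hα0 a)]
      exact le_of_eq (by ring)
    · simp
  refine le_trans step1 ?_
  -- move to ℕ-indexed sums
  set β : ℕ → ℝ := fun j => if h : j < n then α ⟨j, h⟩ else 0 with hβ
  set ccN : ℕ → ℕ → ℝ := fun l a =>
    if hl : l < n then (if ha : a < n then cc ⟨l, hl⟩ ⟨a, ha⟩ else 0) else 0 with hccN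
  have hβfin : ∀ a : Fin n, β (a : ℕ) = α a := fun a => by
    simp only [hβ, dif_pos a.isLt]
  have hccfin : ∀ l a : Fin n, ccN (l : ℕ) (a : ℕ) = cc l a := fun l a => by
    simp only [hccN, dif_pos l.isLt, dif_pos a.isLt]
  have hcc0 : ∀ l a, 0 ≤ ccN l a := by
    intro l a
    simp only [hccN]
    split
    · split
      · exact mul_nonneg (norm_nonneg _) (norm_nonneg _)
      · exact le_refl 0
    · exact le_refl 0
  have hβmono : Antitone β := by
    intro j j' hjj'
    simp only [hβ]
    split
    · split
      · exact hmono (by exact hjj')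
      · omega
    · split
      · exact hα0 _
      · exact le_refl 0
  have hβn : β n = 0 := dif_neg (lt_irrefl n)
  have hrow : ∀ l, ∑ a ∈ Finset.range n, ccN l a ≤ 1 := by
    intro l
    by_cases hl : l < n
    · have : ∑ a ∈ Finset.range n, ccN l a = ∑ a : Fin n, cc ⟨l, hl⟩ a := by
        rw [← Fin.sum_univ_eq_sum_range (fun a => ccN l a) n]
        exact Finset.sum_congr rfl fun a _ => by
          rw [show ccN l (a : ℕ) = ccN ((⟨l, hl⟩ : Fin n) : ℕ) (a : ℕ) from rfl, hccfin]
      rw [this]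
      refine cs_sum_le_one _ _ (fun a => norm_nonneg _) (fun a => norm_nonneg _) ?_ ?_
      · refine le_trans (le_of_eq rfl)
          (le_trans (sum_castLE_le hnm (fun t => ‖(V1 (Fin.castLE hnm ⟨l, hl⟩) t)‖ ^ 2)
            (fun t => sq_nonneg _)) ?_)
        rw [unitary_row_sum_s4 hV1]
      · rw [unitary_col_sum_s4 hV2]
    · have : ∀ a ∈ Finset.range n, ccN l a = 0 := fun a _ => dif_neg hl
      rw [Finset.sum_congr rfl this, Finset.sum_const_zero]
      norm_num
  have hcol : ∀ a, ∑ l ∈ Finset.range n, ccN l a ≤ 1 := by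
    intro a
    by_cases ha : a < n
    · have : ∑ l ∈ Finset.range n, ccN l a = ∑ l : Fin n, cc l ⟨a, ha⟩ := by
        rw [← Fin.sum_univ_eq_sum_range (fun l => ccN l a) n]
        exact Finset.sum_congr rfl fun l _ => by
          rw [show ccN (l : ℕ) a = ccN (l : ℕ) ((⟨a, ha⟩ : Fin n) : ℕ) from rfl, hccfin]
      rw [this]
      refine cs_sum_le_one _ _ (fun l => norm_nonneg _) (fun l => norm_nonneg _) ?_ ?_
      · refine le_trans (le_of_eq rfl)
          (le_trans (sum_castLE_le hnm (fun t => ‖(V1 t (Fin.castLE hnm ⟨a, ha⟩))‖ ^ 2)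
            (fun t => sq_nonneg _)) ?_)
        rw [unitary_col_sum_s4 hV1]
      · rw [unitary_row_sum_s4 hV2]
    · have h0 : ∀ l ∈ Finset.range n, ccN l a = 0 := by
        intro l _
        simp [hccN, ha]
      rw [Finset.sum_congr rfl h0, Finset.sum_const_zero]
      norm_num
  have hLHS : ∑ l : Fin n, (if (l : ℕ) < c then ∑ a : Fin n, α a * cc l a else 0)
      = ∑ l ∈ Finset.range (min n c), ∑ a ∈ Finset.range n, β a * ccN l a := by
    rw [← range_filter_lt n c, Finset.sum_filter,
      ← Fin.sum_univ_eq_sum_range (fun l => if l < c then ∑ a ∈ Finset.range n, β a * ccN l a else 0) n]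
    refine Finset.sum_congr rfl fun l _ => ?_
    congr 1
    rw [← Fin.sum_univ_eq_sum_range (fun a => β a * ccN (l : ℕ) a) n]
    exact Finset.sum_congr rfl fun a _ => by rw [hβfin, hccfin]
  have hRHS : ∑ l ∈ Finset.univ.filter (fun l : Fin n => (l : ℕ) < c), α l
      = ∑ l ∈ Finset.range (min n c), β l := by
    rw [← range_filter_lt n c, Finset.sum_filter, Finset.sum_filter,
      ← Fin.sum_univ_eq_sum_range (fun l => if l < c then β l else 0) n]
    refine Finset.sum_congr rfl fun l _ => ?_
    congr 1
    exact (hβfin l).symm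
  rw [hLHS, hRHS]
  exact core_sum n (min n c) (min_le_left n c) β hβmono hβn ccN hcc0 hrow hcol



theorem stmt4
    {m p n : ℕ} (hnm : n ≤ m)
    (A : Matrix (Fin m) (Fin n) ℂ) (B : Matrix (Fin p) (Fin n) ℂ)
    (hrank : (Matrix.fromRows A B).rank = n)
    (U : Matrix (Fin m) (Fin m) ℂ) (hU : U ∈ Matrix.unitaryGroup (Fin m) ℂ)
    (R : Matrix (Fin n) (Fin n) ℂ) (hR : IsUnit R.det)
    (α : Fin n → ℝ)
    (hα0 : ∀ k, 0 ≤ α k) (hα1 : ∀ k, α k ≤ 1) (hmono : Antitone α)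
    (hA : A = U * (Matrix.of fun (k : Fin m) (l : Fin n) =>
        if (k : ℕ) = (l : ℕ) then Complex.ofReal (α l) else 0) * R)
    (hBB : Bᴴ * B = Rᴴ * Matrix.diagonal (fun l => Complex.ofReal (1 - α l ^ 2)) * R)
    (S : Matrix (Fin n) (Fin n) ℂ) (hS : S.PosDef)
    (hSsq : S * S = Aᴴ * A + Bᴴ * B)
    (i : Fin n) :
    α i =
(⨆ W1 : Matrix.unitaryGroup (Fin m) ℂ, ⨆ W2 : Matrix.unitaryGroup (Fin n) ℂ,
      ‖(Matrix.trace ((W1 : Matrix (Fin m) (Fin m) ℂ) * A * S⁻¹ *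
        (W2 : Matrix (Fin n) (Fin n) ℂ) *
        Matrix.of (fun (k : Fin n) (l : Fin m) =>
          if (k : ℕ) = (l : ℕ) ∧ (k : ℕ) ≤ (i : ℕ) then (1 : ℂ) else 0)))‖) -
(⨆ W1 : Matrix.unitaryGroup (Fin m) ℂ, ⨆ W2 : Matrix.unitaryGroup (Fin n) ℂ,
      ‖(Matrix.trace ((W1 : Matrix (Fin m) (Fin m) ℂ) * A * S⁻¹ *
        (W2 : Matrix (Fin n) (Fin n) ℂ) *
        Matrix.of (fun (k : Fin n) (l : Fin m) =>
          if (k : ℕ) = (l : ℕ) ∧ (k : ℕ) < (i : ℕ) then (1 : ℂ) else 0)))‖) := by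
  have hA' : A = U * sigM m α * R := hA
  have hSdet : IsUnit S.det := hS.det_pos.ne'.isUnit
  have hSH : Sᴴ = S := hS.isHermitian
  have hSinv : S * S⁻¹ = 1 := Matrix.mul_nonsing_inv S hSdet
  have hSinv' : S⁻¹ * S = 1 := Matrix.nonsing_inv_mul S hSdet
  have hUU : star U * U = 1 := Matrix.mem_unitaryGroup_iff'.1 hU
  -- (sigM)ᴴ * sigM = diagonal α²
  have hSig : (sigM m α)ᴴ * sigM m α
      = Matrix.diagonal (fun l : Fin n => Complex.ofReal (α l ^ 2)) := by
    ext l l'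
    rw [Matrix.mul_apply]
    rw [Finset.sum_eq_single (Fin.castLE hnm l)]
    · have h1 : (sigM m α) (Fin.castLE hnm l) l = Complex.ofReal (α l) := by simp [sigM]
      have h2 : (sigM m α) (Fin.castLE hnm l) l' =
          if (l : ℕ) = (l' : ℕ) then Complex.ofReal (α l') else 0 := by simp [sigM]
      rw [Matrix.conjTranspose_apply, h1, h2]
      by_cases h : l = l'
      · subst h
        simp [Matrix.diagonal_apply_eq, sq]
      · have : (l : ℕ) ≠ (l' : ℕ) := fun hh => h (Fin.ext hh)
        simp [Matrix.diagonal_apply_ne _ h, this]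
    · intro t _ ht
      have : (t : ℕ) ≠ (l : ℕ) := fun hh => ht (Fin.ext (by simp [hh]))
      rw [Matrix.conjTranspose_apply]
      simp [sigM, this]
    · simp
  -- Rᴴ R = S * S
  have hRR : Rᴴ * R = S * S := by
    have hAHA : Aᴴ * A = Rᴴ * Matrix.diagonal (fun l : Fin n => Complex.ofReal (α l ^ 2)) * R := by
      rw [hA']
      rw [Matrix.conjTranspose_mul, Matrix.conjTranspose_mul]
      calc Rᴴ * ((sigM m α)ᴴ * Uᴴ) * (U * sigM m α * R)
          = Rᴴ * ((sigM m α)ᴴ * ((Uᴴ * U) * (sigM m α * R))) := by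
            simp only [Matrix.mul_assoc]
        _ = Rᴴ * ((sigM m α)ᴴ * sigM m α) * R := by
            rw [show Uᴴ * U = 1 from hUU, Matrix.one_mul]
            simp only [Matrix.mul_assoc]
        _ = Rᴴ * Matrix.diagonal (fun l : Fin n => Complex.ofReal (α l ^ 2)) * R := by
            rw [hSig]
    rw [hSsq, hAHA, hBB]
    have : Rᴴ * Matrix.diagonal (fun l : Fin n => Complex.ofReal (α l ^ 2)) * R
        + Rᴴ * Matrix.diagonal (fun l => Complex.ofReal (1 - α l ^ 2)) * R
        = Rᴴ * (Matrix.diagonal (fun l : Fin n => Complex.ofReal (α l ^ 2))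
            + Matrix.diagonal (fun l => Complex.ofReal (1 - α l ^ 2))) * R := by
      simp only [Matrix.mul_assoc, ← Matrix.mul_add, ← Matrix.add_mul]
    rw [this, Matrix.diagonal_add]
    have hfun : (fun i : Fin n => Complex.ofReal (α i ^ 2) + Complex.ofReal (1 - α i ^ 2))
        = fun _ : Fin n => (1 : ℂ) := by
      funext l
      rw [← Complex.ofReal_add]
      norm_num
    rw [hfun, Matrix.diagonal_one, Matrix.mul_one]
  set Q : Matrix (Fin n) (Fin n) ℂ := R * S⁻¹ with hQ
  have hQmem : Q ∈ Matrix.unitaryGroup (Fin n) ℂ := by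
    rw [Matrix.mem_unitaryGroup_iff']
    have hstarQ : star Q = S⁻¹ * Rᴴ := by
      rw [hQ, Matrix.star_eq_conjTranspose, Matrix.conjTranspose_mul,
        Matrix.conjTranspose_nonsing_inv, hSH]
    rw [hstarQ, hQ]
    calc S⁻¹ * Rᴴ * (R * S⁻¹) = S⁻¹ * (Rᴴ * R) * S⁻¹ := by simp only [Matrix.mul_assoc]
      _ = S⁻¹ * (S * S) * S⁻¹ := by rw [hRR]
      _ = (S⁻¹ * S) * (S * S⁻¹) := by simp only [Matrix.mul_assoc]
      _ = 1 := by rw [hSinv, hSinv', Matrix.one_mul]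
  have hAS : A * S⁻¹ = U * sigM m α * Q := by
    rw [hA', hQ, Matrix.mul_assoc]
  -- key identity for any c
  have key : ∀ c : ℕ,
      (⨆ W1 : Matrix.unitaryGroup (Fin m) ℂ, ⨆ W2 : Matrix.unitaryGroup (Fin n) ℂ,
        ‖(Matrix.trace ((W1 : Matrix (Fin m) (Fin m) ℂ) * A * S⁻¹ *
          (W2 : Matrix (Fin n) (Fin n) ℂ) * gM n m c))‖)
      = ∑ l ∈ Finset.univ.filter (fun l : Fin n => (l : ℕ) < c), α l := by
    intro c
    set T : ℝ := ∑ l ∈ Finset.univ.filter (fun l : Fin n => (l : ℕ) < c), α l with hT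
    have hprod : ∀ (W1 : Matrix (Fin m) (Fin m) ℂ) (W2 : Matrix (Fin n) (Fin n) ℂ),
        W1 * A * S⁻¹ * W2 * gM n m c = (W1 * U) * sigM m α * (Q * W2) * gM n m c := by
      intro W1 W2
      rw [Matrix.mul_assoc W1 A S⁻¹, hAS]
      simp only [Matrix.mul_assoc]
    have hb : ∀ (W1 : Matrix.unitaryGroup (Fin m) ℂ) (W2 : Matrix.unitaryGroup (Fin n) ℂ),
        ‖(Matrix.trace ((W1 : Matrix (Fin m) (Fin m) ℂ) * A * S⁻¹ *
          (W2 : Matrix (Fin n) (Fin n) ℂ) * gM n m c))‖ ≤ T := by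
      intro W1 W2
      rw [hprod]
      exact trace_bound hnm α hα0 hα1 hmono (mul_mem W1.2 hU) (mul_mem hQmem W2.2) c
    -- attainment
    have hattain : ‖(Matrix.trace
        (((⟨star U, Unitary.star_mem hU⟩ : Matrix.unitaryGroup (Fin m) ℂ) : Matrix (Fin m) (Fin m) ℂ)
          * A * S⁻¹ *
          ((⟨star Q, Unitary.star_mem hQmem⟩ : Matrix.unitaryGroup (Fin n) ℂ) : Matrix (Fin n) (Fin n) ℂ)
          * gM n m c))‖ = T := by
      have h1 : ((⟨star U, Unitary.star_mem hU⟩ : Matrix.unitaryGroup (Fin m) ℂ)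
            : Matrix (Fin m) (Fin m) ℂ) * A * S⁻¹ *
          ((⟨star Q, Unitary.star_mem hQmem⟩ : Matrix.unitaryGroup (Fin n) ℂ)
            : Matrix (Fin n) (Fin n) ℂ) * gM n m c
          = (1 : Matrix (Fin m) (Fin m) ℂ) * sigM m α * (1 : Matrix (Fin n) (Fin n) ℂ)
            * gM n m c := by
        rw [hprod]
        have hc1 : ((⟨star U, Unitary.star_mem hU⟩ : Matrix.unitaryGroup (Fin m) ℂ)
            : Matrix (Fin m) (Fin m) ℂ) = star U := rfl
        have hc2 : ((⟨star Q, Unitary.star_mem hQmem⟩ : Matrix.unitaryGroup (Fin n) ℂ)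
            : Matrix (Fin n) (Fin n) ℂ) = star Q := rfl
        rw [hc1, hc2, hUU, Matrix.mem_unitaryGroup_iff.1 hQmem]
      rw [h1, trace_formula hnm α 1 1 c]
      have h2 : ∀ l : Fin n,
          (∑ a : Fin n, (1 : Matrix (Fin m) (Fin m) ℂ) (Fin.castLE hnm l) (Fin.castLE hnm a)
            * Complex.ofReal (α a) * (1 : Matrix (Fin n) (Fin n) ℂ) a l)
          = Complex.ofReal (α l) := by
        intro l
        rw [Finset.sum_eq_single l]
        · rw [Matrix.one_apply_eq, Matrix.one_apply_eq, one_mul, mul_one]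
        · intro a _ hal
          have hcast : Fin.castLE hnm l ≠ Fin.castLE hnm a := by
            intro hh
            exact hal (Fin.ext (by simpa [Fin.ext_iff] using hh)).symm
          rw [Matrix.one_apply_ne hcast, zero_mul, zero_mul]
        · simp
      have h3 : ∑ l : Fin n, (if (l : ℕ) < c then
            (∑ a : Fin n, (1 : Matrix (Fin m) (Fin m) ℂ) (Fin.castLE hnm l) (Fin.castLE hnm a)
              * Complex.ofReal (α a) * (1 : Matrix (Fin n) (Fin n) ℂ) a l) else 0)
          = Complex.ofReal T := by
        rw [hT, Finset.sum_filter, Complex.ofReal_sum]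
        refine Finset.sum_congr rfl fun l _ => ?_
        rw [h2 l]
        split <;> simp
      rw [h3, Complex.norm_real, Real.norm_of_nonneg]
      rw [hT]
      exact Finset.sum_nonneg fun l _ => hα0 l
    -- combine
    have hbdd2 : ∀ W1 : Matrix.unitaryGroup (Fin m) ℂ, BddAbove (Set.range fun W2 :
        Matrix.unitaryGroup (Fin n) ℂ => ‖(Matrix.trace
          ((W1 : Matrix (Fin m) (Fin m) ℂ) * A * S⁻¹ *
            (W2 : Matrix (Fin n) (Fin n) ℂ) * gM n m c))‖) := by
      intro W1
      exact ⟨T, Set.forall_mem_range.2 fun W2 => hb W1 W2⟩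
    refine le_antisymm ?_ ?_
    · exact ciSup_le fun W1 => ciSup_le fun W2 => hb W1 W2
    · have hstep1 : T ≤ ⨆ W2 : Matrix.unitaryGroup (Fin n) ℂ, ‖(Matrix.trace
          ((((⟨star U, Unitary.star_mem hU⟩ : Matrix.unitaryGroup (Fin m) ℂ))
            : Matrix (Fin m) (Fin m) ℂ) * A * S⁻¹ *
            (W2 : Matrix (Fin n) (Fin n) ℂ) * gM n m c))‖ := by
        rw [← hattain]
        exact le_ciSup (hbdd2 _) (⟨star Q, Unitary.star_mem hQmem⟩ : Matrix.unitaryGroup (Fin n) ℂ)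
      refine le_trans hstep1 ?_
      refine le_ciSup (f := fun W1 : Matrix.unitaryGroup (Fin m) ℂ =>
        ⨆ W2 : Matrix.unitaryGroup (Fin n) ℂ, ‖(Matrix.trace
          ((W1 : Matrix (Fin m) (Fin m) ℂ) * A * S⁻¹ *
            (W2 : Matrix (Fin n) (Fin n) ℂ) * gM n m c))‖) ?_ _
      exact ⟨T, Set.forall_mem_range.2 fun W1 => ciSup_le fun W2 => hb W1 W2⟩
  -- rewrite the goal's matrices as gM
  have e1 : (Matrix.of (fun (k : Fin n) (l : Fin m) =>
      if (k : ℕ) = (l : ℕ) ∧ (k : ℕ) ≤ (i : ℕ) then (1 : ℂ) else 0)) = gM n m ((i : ℕ) + 1) := by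
    ext k l
    simp [gM, Nat.lt_succ_iff]
  have e2 : (Matrix.of (fun (k : Fin n) (l : Fin m) =>
      if (k : ℕ) = (l : ℕ) ∧ (k : ℕ) < (i : ℕ) then (1 : ℂ) else 0)) = gM n m (i : ℕ) := rfl
  rw [e1, e2, key ((i : ℕ) + 1), key (i : ℕ)]
  have hins : Finset.univ.filter (fun l : Fin n => (l : ℕ) < (i : ℕ) + 1)
      = insert i (Finset.univ.filter (fun l : Fin n => (l : ℕ) < (i : ℕ))) := by
    ext l
    simp only [Finset.mem_filter, Finset.mem_insert, Finset.mem_univ, true_and, Nat.lt_succ_iff]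
    constructor
    · intro h
      rcases Nat.lt_or_ge (l : ℕ) (i : ℕ) with h' | h'
      · exact Or.inr h'
      · exact Or.inl (Fin.ext (le_antisymm h h'))
    · rintro (rfl | h)
      · exact le_refl _
      · exact Nat.le_of_lt h
  rw [hins, Finset.sum_insert (by simp)]
  ring
end

section
/- Let p ≤ n and let {A,B} be an (m,p,n)-GMP with GSVD as in the context, with generalized singular values (αᵢ, βᵢ); in particular β₁ = ⋯ = β_{n−p} = 0. Then for every n−p+1 ≤ i ≤ n, βᵢ equals the difference of maxima: βᵢ = max_{Ξ₃ ∈ 𝕌_n, Ξ₄ ∈ 𝕌_p} |tr(Ξ₃ (AᴴA + BᴴB)^{-1/2} Bᴴ Ξ₄ 𝒲_i)| − max_{Ξ₃ ∈ 𝕌_n, Ξ₄ ∈ 𝕌_p} |tr(Ξ₃ (AᴴA + BᴴB)^{-1/2} Bᴴ Ξ₄ 𝒲_{i+1})|. -/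
open Matrix BigOperators
open scoped ComplexOrder

namespace Stmt7Aux

variable {p n : ℕ}

def emb (hpn : p ≤ n) (k : Fin p) : Fin n := ⟨(k : ℕ) + (n - p), by omega⟩

lemma emb_inj (hpn : p ≤ n) : Function.Injective (emb hpn) := by
  intro a b h
  simp only [emb, Fin.mk.injEq] at h
  exact Fin.ext (by omega)

lemma rearr (γ w : Fin p → ℝ) (hγ0 : ∀ k, 0 ≤ γ k) (hγ1 : ∀ k, γ k ≤ 1)
    (hγmono : Monotone γ)
    (hw0 : ∀ k, 0 ≤ w k) (hw1 : ∀ k, w k ≤ 1) (t : ℕ)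
    (hsum : ∑ k, w k ≤ (Finset.univ.filter (fun k : Fin p => t ≤ (k : ℕ))).card) :
    ∑ k, γ k * w k ≤ ∑ k ∈ Finset.univ.filter (fun k : Fin p => t ≤ (k : ℕ)), γ k := by
  set T := Finset.univ.filter (fun k : Fin p => t ≤ (k : ℕ)) with hT
  by_cases hp : p ≤ t
  · have hTe : T = ∅ := by
      apply Finset.eq_empty_of_forall_notMem
      intro k hk
      rw [hT, Finset.mem_filter] at hk
      omega
    rw [hTe]
    simp only [Finset.sum_empty]
    have h1 : ∑ k, γ k * w k ≤ ∑ k, w k := by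
      apply Finset.sum_le_sum
      intro k _
      nlinarith [hγ0 k, hγ1 k, hw0 k, hw1 k]
    have h2 : (T.card : ℝ) = 0 := by rw [hTe]; simp
    rw [hTe] at hsum
    simp at hsum
    linarith
  · push_neg at hp
    set t' : Fin p := ⟨t, hp⟩ with ht'
    have hsplit : ∑ k, γ k * w k
        = ∑ k ∈ T, γ k * w k + ∑ k ∈ Finset.univ.filter (fun k : Fin p => ¬ t ≤ (k : ℕ)), γ k * w k := by
      rw [hT, Finset.sum_filter_add_sum_filter_not]
    have hwsplit : ∑ k, w k
        = ∑ k ∈ T, w k + ∑ k ∈ Finset.univ.filter (fun k : Fin p => ¬ t ≤ (k : ℕ)), w k := by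
      rw [hT, Finset.sum_filter_add_sum_filter_not]
    have h1 : ∑ k ∈ Finset.univ.filter (fun k : Fin p => ¬ t ≤ (k : ℕ)), γ k * w k
        ≤ γ t' * ∑ k ∈ Finset.univ.filter (fun k : Fin p => ¬ t ≤ (k : ℕ)), w k := by
      rw [Finset.mul_sum]
      apply Finset.sum_le_sum
      intro k hk
      rw [Finset.mem_filter] at hk
      have : γ k ≤ γ t' := hγmono (by simp [ht', Fin.le_def]; omega)
      exact mul_le_mul_of_nonneg_right this (hw0 k)
    have h2 : ∑ k ∈ Finset.univ.filter (fun k : Fin p => ¬ t ≤ (k : ℕ)), w k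
        ≤ ∑ k ∈ T, (1 - w k) := by
      rw [Finset.sum_sub_distrib, Finset.sum_const, nsmul_eq_mul, mul_one]
      linarith [hwsplit ▸ hsum]
    have h3 : γ t' * ∑ k ∈ T, (1 - w k) ≤ ∑ k ∈ T, γ k * (1 - w k) := by
      rw [Finset.mul_sum]
      apply Finset.sum_le_sum
      intro k hk
      rw [hT, Finset.mem_filter] at hk
      have : γ t' ≤ γ k := hγmono (by simp [ht', Fin.le_def]; omega)
      have h4 : 0 ≤ 1 - w k := by linarith [hw1 k]
      exact mul_le_mul_of_nonneg_right this h4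
    have h5 : γ t' * ∑ k ∈ Finset.univ.filter (fun k : Fin p => ¬ t ≤ (k : ℕ)), w k
        ≤ γ t' * ∑ k ∈ T, (1 - w k) :=
      mul_le_mul_of_nonneg_left h2 (hγ0 t')
    have h6 : ∑ k ∈ T, γ k * w k + ∑ k ∈ T, γ k * (1 - w k) = ∑ k ∈ T, γ k := by
      rw [← Finset.sum_add_distrib]
      apply Finset.sum_congr rfl
      intro k _
      ring
    linarith

lemma row_norm {N : ℕ} {U : Matrix (Fin N) (Fin N) ℂ}
    (hU : U ∈ Matrix.unitaryGroup (Fin N) ℂ) (a : Fin N) :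
    ∑ b, Norm.norm (U a b) ^ 2 = 1 := by
  have h : U * star U = 1 := Matrix.mem_unitaryGroup_iff.mp hU
  have h2 : (U * star U) a a = 1 := by rw [h]; simp [Matrix.one_apply]
  rw [Matrix.mul_apply] at h2
  have h3 : ∑ b, ((Norm.norm (U a b) ^ 2 : ℝ) : ℂ) = 1 := by
    rw [← h2]
    apply Finset.sum_congr rfl
    intro b _
    rw [Matrix.star_apply, RCLike.star_def, Complex.mul_conj, Complex.sq_norm]
  exact_mod_cast h3

lemma col_norm {N : ℕ} {U : Matrix (Fin N) (Fin N) ℂ}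
    (hU : U ∈ Matrix.unitaryGroup (Fin N) ℂ) (b : Fin N) :
    ∑ a, Norm.norm (U a b) ^ 2 = 1 := by
  have h : star U * U = 1 := Matrix.mem_unitaryGroup_iff'.mp hU
  have h2 : (star U * U) b b = 1 := by rw [h]; simp [Matrix.one_apply]
  rw [Matrix.mul_apply] at h2
  have h3 : ∑ a, ((Norm.norm (U a b) ^ 2 : ℝ) : ℂ) = 1 := by
    rw [← h2]
    apply Finset.sum_congr rfl
    intro a _
    rw [Matrix.star_apply, RCLike.star_def, mul_comm, Complex.mul_conj, Complex.sq_norm]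
  exact_mod_cast h3

-- sum over top filter via emb
lemma sum_emb (hpn : p ≤ n) (j : ℕ) (hj : n ≤ p + j) (f : Fin n → ℝ) :
    ∑ k ∈ Finset.univ.filter (fun k : Fin p => p + j - n ≤ (k : ℕ)), f (emb hpn k)
      = ∑ l ∈ Finset.univ.filter (fun l : Fin n => j ≤ (l : ℕ)), f l := by
  apply Finset.sum_bij (fun (k : Fin p) _ => emb hpn k)
  · intro k hk
    rw [Finset.mem_filter] at *
    refine ⟨Finset.mem_univ _, ?_⟩
    simp only [emb] at *
    omega
  · intro a ha b hb h
    exact emb_inj hpn h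
  · intro l hl
    rw [Finset.mem_filter] at hl
    have h1 : (l : ℕ) + p ≥ n := by omega
    refine ⟨⟨(l : ℕ) - (n - p), by omega⟩, Finset.mem_filter.mpr ⟨Finset.mem_univ _, by simp; omega⟩, ?_⟩
    apply Fin.ext
    simp [emb]
    omega
  · intro k hk
    rfl

lemma key_bound (hpn : p ≤ n) (β : Fin n → ℝ)
    (hβ0 : ∀ k, 0 ≤ β k) (hβ1 : ∀ k, β k ≤ 1) (hmono : Monotone β)
    (j : ℕ) (hj : n ≤ p + j)
    {Q : Matrix (Fin n) (Fin n) ℂ} (hQ : Q ∈ Matrix.unitaryGroup (Fin n) ℂ)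
    {P : Matrix (Fin p) (Fin p) ℂ} (hP : P ∈ Matrix.unitaryGroup (Fin p) ℂ) :
    Norm.norm (∑ k' : Fin p, if p + j ≤ (k' : ℕ) + n then
        ∑ k : Fin p, (β (emb hpn k) : ℂ) * Q (emb hpn k') (emb hpn k) * P k k' else 0)
      ≤ ∑ l ∈ Finset.univ.filter (fun l : Fin n => j ≤ (l : ℕ)), β l := by
  set F := Finset.univ.filter (fun k' : Fin p => p + j ≤ (k' : ℕ) + n) with hF
  have hFcard : (F.card : ℝ) = ((Finset.univ.filter (fun k : Fin p => p + j - n ≤ (k : ℕ))).card : ℝ) := by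
    congr 2
    apply Finset.filter_congr
    intro k _
    omega
  have e1 : (∑ k' : Fin p, if p + j ≤ (k' : ℕ) + n then
        ∑ k : Fin p, (β (emb hpn k) : ℂ) * Q (emb hpn k') (emb hpn k) * P k k' else 0)
      = ∑ k : Fin p, (β (emb hpn k) : ℂ) * ∑ k' ∈ F, Q (emb hpn k') (emb hpn k) * P k k' := by
    rw [← Finset.sum_filter, ← hF, Finset.sum_comm]
    apply Finset.sum_congr rfl
    intro k _
    rw [Finset.mul_sum]
    apply Finset.sum_congr rfl
    intro k' _
    ring
  rw [e1]
  have e2 : Norm.norm (∑ k : Fin p, (β (emb hpn k) : ℂ) * ∑ k' ∈ F, Q (emb hpn k') (emb hpn k) * P k k')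
      ≤ ∑ k : Fin p, β (emb hpn k) *
          Norm.norm (∑ k' ∈ F, Q (emb hpn k') (emb hpn k) * P k k') := by
    refine le_trans (norm_sum_le _ _) (le_of_eq (Finset.sum_congr rfl fun k _ => ?_))
    rw [norm_mul, Complex.norm_real, Real.norm_eq_abs, abs_of_nonneg (hβ0 _)]
  refine le_trans e2 ?_
  set w : Fin p → ℝ := fun k =>
    (∑ k' ∈ F, Norm.norm (Q (emb hpn k') (emb hpn k)) ^ 2
      + ∑ k' ∈ F, Norm.norm (P k k') ^ 2) / 2 with hw
  have e3 : ∀ k : Fin p,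
      Norm.norm (∑ k' ∈ F, Q (emb hpn k') (emb hpn k) * P k k') ≤ w k := by
    intro k
    refine le_trans (norm_sum_le _ _) ?_
    have hterm : ∀ k' ∈ F, Norm.norm (Q (emb hpn k') (emb hpn k) * P k k')
        ≤ (Norm.norm (Q (emb hpn k') (emb hpn k)) ^ 2 + Norm.norm (P k k') ^ 2) / 2 := by
      intro k' _
      rw [norm_mul]
      nlinarith [sq_nonneg (Norm.norm (Q (emb hpn k') (emb hpn k)) - Norm.norm (P k k')),
        norm_nonneg (Q (emb hpn k') (emb hpn k)), norm_nonneg (P k k')]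
    calc ∑ k' ∈ F, Norm.norm (Q (emb hpn k') (emb hpn k) * P k k')
        ≤ ∑ k' ∈ F, (Norm.norm (Q (emb hpn k') (emb hpn k)) ^ 2 + Norm.norm (P k k') ^ 2) / 2 :=
          Finset.sum_le_sum hterm
      _ = w k := by
          show _ = (∑ k' ∈ F, Norm.norm (Q (emb hpn k') (emb hpn k)) ^ 2
            + ∑ k' ∈ F, Norm.norm (P k k') ^ 2) / 2
          rw [← Finset.sum_add_distrib, Finset.sum_div]
  have e4 : ∑ k : Fin p, β (emb hpn k) *
      Norm.norm (∑ k' ∈ F, Q (emb hpn k') (emb hpn k) * P k k')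
      ≤ ∑ k : Fin p, β (emb hpn k) * w k :=
    Finset.sum_le_sum fun k _ => mul_le_mul_of_nonneg_left (e3 k) (hβ0 _)
  refine le_trans e4 ?_
  have hQcol : ∀ k : Fin p, ∑ k' ∈ F, Norm.norm (Q (emb hpn k') (emb hpn k)) ^ 2 ≤ 1 := by
    intro k
    calc ∑ k' ∈ F, Norm.norm (Q (emb hpn k') (emb hpn k)) ^ 2
        = ∑ a ∈ F.image (emb hpn), Norm.norm (Q a (emb hpn k)) ^ 2 := by
          rw [Finset.sum_image (fun a _ b _ h => emb_inj hpn h)]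
      _ ≤ ∑ a : Fin n, Norm.norm (Q a (emb hpn k)) ^ 2 :=
          Finset.sum_le_sum_of_subset_of_nonneg (Finset.subset_univ _)
            (fun a _ _ => sq_nonneg _)
      _ = 1 := col_norm hQ _
  have hProw : ∀ k : Fin p, ∑ k' ∈ F, Norm.norm (P k k') ^ 2 ≤ 1 := by
    intro k
    calc ∑ k' ∈ F, Norm.norm (P k k') ^ 2
        ≤ ∑ k' : Fin p, Norm.norm (P k k') ^ 2 :=
          Finset.sum_le_sum_of_subset_of_nonneg (Finset.subset_univ _)
            (fun a _ _ => sq_nonneg _)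
      _ = 1 := row_norm hP _
  have hw1 : ∀ k, w k ≤ 1 := by
    intro k
    have h1 := hQcol k
    have h2 := hProw k
    show (∑ k' ∈ F, Norm.norm (Q (emb hpn k') (emb hpn k)) ^ 2
      + ∑ k' ∈ F, Norm.norm (P k k') ^ 2) / 2 ≤ 1
    linarith
  have hw0 : ∀ k, 0 ≤ w k := by
    intro k
    have h1 : 0 ≤ ∑ k' ∈ F, Norm.norm (Q (emb hpn k') (emb hpn k)) ^ 2 :=
      Finset.sum_nonneg fun _ _ => sq_nonneg _
    have h2 : 0 ≤ ∑ k' ∈ F, Norm.norm (P k k') ^ 2 :=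
      Finset.sum_nonneg fun _ _ => sq_nonneg _
    show (0:ℝ) ≤ (∑ k' ∈ F, Norm.norm (Q (emb hpn k') (emb hpn k)) ^ 2
      + ∑ k' ∈ F, Norm.norm (P k k') ^ 2) / 2
    linarith
  have hwsum : ∑ k, w k ≤ ((Finset.univ.filter (fun k : Fin p => p + j - n ≤ (k : ℕ))).card : ℝ) := by
    rw [← hFcard]
    have hA : ∑ k : Fin p, ∑ k' ∈ F, Norm.norm (Q (emb hpn k') (emb hpn k)) ^ 2 ≤ (F.card : ℝ) := by
      rw [Finset.sum_comm]
      calc ∑ k' ∈ F, ∑ k : Fin p, Norm.norm (Q (emb hpn k') (emb hpn k)) ^ 2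
          ≤ ∑ _k' ∈ F, (1:ℝ) := by
            apply Finset.sum_le_sum
            intro k' _
            calc ∑ k : Fin p, Norm.norm (Q (emb hpn k') (emb hpn k)) ^ 2
                = ∑ b ∈ (Finset.univ.image (emb hpn)), Norm.norm (Q (emb hpn k') b) ^ 2 := by
                  rw [Finset.sum_image (fun a _ b _ h => emb_inj hpn h)]
              _ ≤ ∑ b : Fin n, Norm.norm (Q (emb hpn k') b) ^ 2 :=
                  Finset.sum_le_sum_of_subset_of_nonneg (Finset.subset_univ _)
                    (fun a _ _ => sq_nonneg _)
              _ = 1 := row_norm hQ _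
        _ = (F.card : ℝ) := by rw [Finset.sum_const, nsmul_eq_mul, mul_one]
    have hB2 : ∑ k : Fin p, ∑ k' ∈ F, Norm.norm (P k k') ^ 2 ≤ (F.card : ℝ) := by
      rw [Finset.sum_comm]
      calc ∑ k' ∈ F, ∑ k : Fin p, Norm.norm (P k k') ^ 2
          ≤ ∑ _k' ∈ F, (1:ℝ) :=
            Finset.sum_le_sum fun k' _ => le_of_eq (col_norm hP _)
        _ = (F.card : ℝ) := by rw [Finset.sum_const, nsmul_eq_mul, mul_one]
    have hsumw : ∑ k, w k = (∑ k : Fin p, ∑ k' ∈ F, Norm.norm (Q (emb hpn k') (emb hpn k)) ^ 2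
        + ∑ k : Fin p, ∑ k' ∈ F, Norm.norm (P k k') ^ 2) / 2 := by
      show ∑ k : Fin p, (∑ k' ∈ F, Norm.norm (Q (emb hpn k') (emb hpn k)) ^ 2
        + ∑ k' ∈ F, Norm.norm (P k k') ^ 2) / 2 = _
      rw [← Finset.sum_div, Finset.sum_add_distrib]
    rw [hsumw]
    linarith
  have hrearr := rearr (fun k => β (emb hpn k)) w (fun k => hβ0 _) (fun k => hβ1 _)
    (fun a b hab => hmono (show emb hpn a ≤ emb hpn b by simp only [emb, Fin.mk_le_mk]; omega)) hw0 hw1 (p + j - n) hwsum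
  refine le_trans hrearr ?_
  rw [sum_emb hpn j hj]
lemma trace_eq (hpn : p ≤ n) (β : Fin n → ℝ) (j : ℕ)
    (Q : Matrix (Fin n) (Fin n) ℂ) (P : Matrix (Fin p) (Fin p) ℂ) :
    Matrix.trace (Q * (Matrix.of fun (k : Fin p) (l : Fin n) =>
        if (l : ℕ) + p = n + (k : ℕ) then Complex.ofReal (β l) else 0)ᴴ * P *
      Matrix.of (fun (k : Fin p) (l : Fin n) =>
        if (l : ℕ) + p = n + (k : ℕ) ∧ p + j ≤ (k : ℕ) + n then (1 : ℂ) else 0))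
    = ∑ k' : Fin p, if p + j ≤ (k' : ℕ) + n then
        ∑ k : Fin p, (β (emb hpn k) : ℂ) * Q (emb hpn k') (emb hpn k) * P k k' else 0 := by
  have hcond : ∀ (k : Fin p) (l : Fin n), ((l : ℕ) + p = n + (k : ℕ)) ↔ l = emb hpn k := by
    intro k l
    rw [Fin.ext_iff]
    simp only [emb]
    have := k.isLt
    have := l.isLt
    omega
  have h1 : Q * (Matrix.of fun (k : Fin p) (l : Fin n) =>
      if (l : ℕ) + p = n + (k : ℕ) then Complex.ofReal (β l) else 0)ᴴ
      = Matrix.of (fun (a : Fin n) (k : Fin p) => Q a (emb hpn k) * (β (emb hpn k) : ℂ)) := by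
    ext a k
    rw [Matrix.mul_apply, Matrix.of_apply]
    have hterm : ∀ l : Fin n, Q a l * ((Matrix.of fun (k : Fin p) (l : Fin n) =>
        if (l : ℕ) + p = n + (k : ℕ) then Complex.ofReal (β l) else 0)ᴴ l k)
        = if l = emb hpn k then Q a l * (β l : ℂ) else 0 := by
      intro l
      rw [Matrix.conjTranspose_apply, Matrix.of_apply]
      simp only [hcond k l]
      split
      · rw [Complex.star_def, Complex.conj_ofReal]
      · rw [star_zero, mul_zero]
    rw [Finset.sum_congr rfl (fun l _ => hterm l), Finset.sum_ite_eq' Finset.univ (emb hpn k)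
      (fun l => Q a l * (β l : ℂ))]
    simp
  rw [h1]
  have h2 : ∀ (a : Fin n) (k' : Fin p),
      (Matrix.of (fun (a : Fin n) (k : Fin p) => Q a (emb hpn k) * (β (emb hpn k) : ℂ)) * P) a k'
      = ∑ k : Fin p, Q a (emb hpn k) * (β (emb hpn k) : ℂ) * P k k' := by
    intro a k'
    rw [Matrix.mul_apply]
    rfl
  rw [Matrix.trace]
  have h3 : ∀ a : Fin n, (Matrix.of (fun (a : Fin n) (k : Fin p) =>
      Q a (emb hpn k) * (β (emb hpn k) : ℂ)) * P *
      Matrix.of (fun (k : Fin p) (l : Fin n) =>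
        if (l : ℕ) + p = n + (k : ℕ) ∧ p + j ≤ (k : ℕ) + n then (1 : ℂ) else 0)).diag a
      = ∑ k' : Fin p, if a = emb hpn k' ∧ p + j ≤ (k' : ℕ) + n then
          ∑ k : Fin p, Q a (emb hpn k) * (β (emb hpn k) : ℂ) * P k k' else 0 := by
    intro a
    rw [Matrix.diag_apply, Matrix.mul_apply]
    apply Finset.sum_congr rfl
    intro k' _
    rw [h2, Matrix.of_apply]
    simp only [hcond k' a]
    split
    · rw [mul_one]
    · rw [mul_zero]
  rw [Finset.sum_congr rfl (fun a _ => h3 a), Finset.sum_comm]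
  apply Finset.sum_congr rfl
  intro k' _
  by_cases hc : p + j ≤ (k' : ℕ) + n
  · simp only [hc, and_true, if_true]
    rw [Finset.sum_ite_eq' Finset.univ (emb hpn k')
      (fun a => ∑ k : Fin p, Q a (emb hpn k) * (β (emb hpn k) : ℂ) * P k k')]
    simp only [Finset.mem_univ, if_true]
    apply Finset.sum_congr rfl
    intro k _
    ring
  · simp [hc]
lemma sigma_mul (hpn : p ≤ n) (β : Fin n → ℝ)
    (hzero : ∀ k : Fin n, (k : ℕ) + p < n → β k = 0) :
    (Matrix.of fun (k : Fin p) (l : Fin n) =>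
        if (l : ℕ) + p = n + (k : ℕ) then Complex.ofReal (β l) else 0)ᴴ *
      (Matrix.of fun (k : Fin p) (l : Fin n) =>
        if (l : ℕ) + p = n + (k : ℕ) then Complex.ofReal (β l) else 0)
    = Matrix.diagonal (fun l => ((β l : ℂ)) ^ 2) := by
  have hcond : ∀ (k : Fin p) (l : Fin n), ((l : ℕ) + p = n + (k : ℕ)) ↔ l = emb hpn k := by
    intro k l
    rw [Fin.ext_iff]
    simp only [emb]
    have := k.isLt
    have := l.isLt
    omega
  ext l l'
  rw [Matrix.mul_apply, Matrix.diagonal_apply]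
  have hterm : ∀ k : Fin p,
      (Matrix.of fun (k : Fin p) (l : Fin n) =>
        if (l : ℕ) + p = n + (k : ℕ) then Complex.ofReal (β l) else 0)ᴴ l k *
      (Matrix.of fun (k : Fin p) (l : Fin n) =>
        if (l : ℕ) + p = n + (k : ℕ) then Complex.ofReal (β l) else 0) k l'
      = (if l = emb hpn k then (β l : ℂ) else 0) * (if l' = emb hpn k then (β l' : ℂ) else 0) := by
    intro k
    rw [Matrix.conjTranspose_apply, Matrix.of_apply, Matrix.of_apply]
    simp only [hcond k l, hcond k l']
    congr 1
    split
    · rw [Complex.star_def, Complex.conj_ofReal]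
    · rw [star_zero]
  rw [Finset.sum_congr rfl (fun k _ => hterm k)]
  by_cases hl : n ≤ (l : ℕ) + p
  · set k₀ : Fin p := ⟨(l : ℕ) - (n - p), by omega⟩ with hk₀
    have hek₀ : emb hpn k₀ = l := by
      apply Fin.ext
      simp [emb, hk₀]
      omega
    rw [Finset.sum_eq_single k₀]
    · rw [hek₀, if_pos rfl]
      by_cases hll : l' = l
      · subst hll
        rw [if_pos rfl, if_pos rfl]
        ring
      · rw [if_neg hll, if_neg (fun h : l = l' => hll h.symm), mul_zero]
    · intro k _ hk
      have : l ≠ emb hpn k := by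
        intro h
        apply hk
        have : emb hpn k = emb hpn k₀ := by rw [← h, hek₀]
        exact emb_inj hpn this
      rw [if_neg this, zero_mul]
    · intro h
      exact absurd (Finset.mem_univ k₀) h
  · have hβl : β l = 0 := hzero l (by omega)
    have hnoteq : ∀ k : Fin p, l ≠ emb hpn k := by
      intro k h
      have hv : (l : ℕ) = (k : ℕ) + (n - p) := by rw [h]; rfl
      omega
    rw [Finset.sum_eq_zero (fun k _ => by rw [if_neg (hnoteq k), zero_mul])]
    split
    · rw [hβl]
      norm_num
    · rfl

lemma gram_eq {m : ℕ} (hpn : p ≤ n)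
    (A : Matrix (Fin m) (Fin n) ℂ) (B : Matrix (Fin p) (Fin n) ℂ)
    (V : Matrix (Fin p) (Fin p) ℂ) (hV : V ∈ Matrix.unitaryGroup (Fin p) ℂ)
    (R : Matrix (Fin n) (Fin n) ℂ)
    (β : Fin n → ℝ)
    (hzero : ∀ k : Fin n, (k : ℕ) + p < n → β k = 0)
    (hB : B = V * (Matrix.of fun (k : Fin p) (l : Fin n) =>
        if (l : ℕ) + p = n + (k : ℕ) then Complex.ofReal (β l) else 0) * R)
    (hAA : Aᴴ * A = Rᴴ * Matrix.diagonal (fun l => Complex.ofReal (1 - β l ^ 2)) * R) :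
    Aᴴ * A + Bᴴ * B = Rᴴ * R := by
  set Sg := (Matrix.of fun (k : Fin p) (l : Fin n) =>
        if (l : ℕ) + p = n + (k : ℕ) then Complex.ofReal (β l) else 0) with hSg
  have hVV : Vᴴ * V = 1 := by
    rw [← Matrix.star_eq_conjTranspose]
    exact Matrix.mem_unitaryGroup_iff'.mp hV
  have hsm : Sgᴴ * Sg = Matrix.diagonal (fun l => ((β l : ℂ)) ^ 2) := by
    rw [hSg]
    exact sigma_mul hpn β hzero
  have hBB : Bᴴ * B = Rᴴ * Matrix.diagonal (fun l => ((β l : ℂ)) ^ 2) * R := by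
    have h0 : Bᴴ * B = Rᴴ * (Sgᴴ * (Vᴴ * (V * (Sg * R)))) := by
      rw [hB]
      simp only [Matrix.conjTranspose_mul, Matrix.mul_assoc]
    have h1 : Vᴴ * (V * (Sg * R)) = Sg * R := by
      rw [← Matrix.mul_assoc, hVV, Matrix.one_mul]
    rw [h0, h1, ← Matrix.mul_assoc Sgᴴ Sg R, hsm, ← Matrix.mul_assoc]
  rw [hAA, hBB, ← Matrix.add_mul, ← Matrix.mul_add, Matrix.diagonal_add]
  have hd : (Matrix.diagonal fun l => Complex.ofReal (1 - β l ^ 2) + ((β l : ℂ)) ^ 2)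
      = (1 : Matrix (Fin n) (Fin n) ℂ) := by
    rw [← Matrix.diagonal_one]
    congr 1
    funext l
    push_cast
    ring
  rw [hd, Matrix.mul_one]
lemma key_sup {m : ℕ} (hpn : p ≤ n)
    (A : Matrix (Fin m) (Fin n) ℂ) (B : Matrix (Fin p) (Fin n) ℂ)
    (V : Matrix (Fin p) (Fin p) ℂ) (hV : V ∈ Matrix.unitaryGroup (Fin p) ℂ)
    (R : Matrix (Fin n) (Fin n) ℂ) (hR : IsUnit R.det)
    (β : Fin n → ℝ)
    (hβ0 : ∀ k, 0 ≤ β k) (hβ1 : ∀ k, β k ≤ 1) (hmono : Monotone β)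
    (hzero : ∀ k : Fin n, (k : ℕ) + p < n → β k = 0)
    (hB : B = V * (Matrix.of fun (k : Fin p) (l : Fin n) =>
        if (l : ℕ) + p = n + (k : ℕ) then Complex.ofReal (β l) else 0) * R)
    (hAA : Aᴴ * A = Rᴴ * Matrix.diagonal (fun l => Complex.ofReal (1 - β l ^ 2)) * R)
    (S : Matrix (Fin n) (Fin n) ℂ) (hS : S.PosDef)
    (hSsq : S * S = Aᴴ * A + Bᴴ * B)
    (j : ℕ) (hj : n ≤ p + j) :
    (⨆ X3 : Matrix.unitaryGroup (Fin n) ℂ, ⨆ X4 : Matrix.unitaryGroup (Fin p) ℂ,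
      Norm.norm (Matrix.trace ((X3 : Matrix (Fin n) (Fin n) ℂ) * S⁻¹ * Bᴴ *
        (X4 : Matrix (Fin p) (Fin p) ℂ) *
        Matrix.of (fun (k : Fin p) (l : Fin n) =>
          if (l : ℕ) + p = n + (k : ℕ) ∧ p + j ≤ (k : ℕ) + n then (1 : ℂ) else 0))))
    = ∑ l ∈ Finset.univ.filter (fun l : Fin n => j ≤ (l : ℕ)), β l := by
  haveI : Nonempty (Matrix.unitaryGroup (Fin n) ℂ) := ⟨1⟩
  haveI : Nonempty (Matrix.unitaryGroup (Fin p) ℂ) := ⟨1⟩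
  -- basic facts
  have hSRR : S * S = Rᴴ * R := by
    rw [hSsq]
    exact gram_eq hpn A B V hV R β hzero hB hAA
  have hRH : IsUnit (Rᴴ).det := by
    rw [Matrix.det_conjTranspose]
    exact hR.star
  have hSinvH : (S⁻¹)ᴴ = S⁻¹ := by
    rw [Matrix.conjTranspose_nonsing_inv, hS.isHermitian]
  -- G is unitary
  have hG : S⁻¹ * Rᴴ ∈ Matrix.unitaryGroup (Fin n) ℂ := by
    rw [Matrix.mem_unitaryGroup_iff']
    rw [Matrix.star_eq_conjTranspose, Matrix.conjTranspose_mul, Matrix.conjTranspose_conjTranspose,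
      hSinvH]
    have h1 : R * S⁻¹ * (S⁻¹ * Rᴴ) = R * ((S * S)⁻¹ * Rᴴ) := by
      rw [Matrix.mul_inv_rev]
      simp only [Matrix.mul_assoc]
    rw [h1, hSRR, Matrix.mul_inv_rev, ← Matrix.mul_assoc, ← Matrix.mul_assoc,
      Matrix.mul_nonsing_inv _ hR, Matrix.one_mul, Matrix.nonsing_inv_mul _ hRH]
  have hGG : star (S⁻¹ * Rᴴ) * (S⁻¹ * Rᴴ) = 1 := Matrix.mem_unitaryGroup_iff'.mp hG
  have hGstar : star (S⁻¹ * Rᴴ) ∈ Matrix.unitaryGroup (Fin n) ℂ := by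
    rw [Matrix.mem_unitaryGroup_iff, star_star]
    exact hGG
  have hVH : Vᴴ ∈ Matrix.unitaryGroup (Fin p) ℂ := by
    rw [← Matrix.star_eq_conjTranspose, Matrix.mem_unitaryGroup_iff, star_star]
    exact Matrix.mem_unitaryGroup_iff'.mp hV
  have hVV : Vᴴ * V = 1 := by
    rw [← Matrix.star_eq_conjTranspose]
    exact Matrix.mem_unitaryGroup_iff'.mp hV
  -- rewriting the trace expression
  have hrw : ∀ (X3 : Matrix (Fin n) (Fin n) ℂ) (X4 : Matrix (Fin p) (Fin p) ℂ),
      X3 * S⁻¹ * Bᴴ * X4 *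
        Matrix.of (fun (k : Fin p) (l : Fin n) =>
          if (l : ℕ) + p = n + (k : ℕ) ∧ p + j ≤ (k : ℕ) + n then (1 : ℂ) else 0)
      = (X3 * (S⁻¹ * Rᴴ)) * (Matrix.of fun (k : Fin p) (l : Fin n) =>
          if (l : ℕ) + p = n + (k : ℕ) then Complex.ofReal (β l) else 0)ᴴ * (Vᴴ * X4) *
        Matrix.of (fun (k : Fin p) (l : Fin n) =>
          if (l : ℕ) + p = n + (k : ℕ) ∧ p + j ≤ (k : ℕ) + n then (1 : ℂ) else 0) := by
    intro X3 X4
    rw [hB]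
    simp only [Matrix.conjTranspose_mul, Matrix.mul_assoc]
  -- the uniform bound
  have bound : ∀ (X3 : Matrix.unitaryGroup (Fin n) ℂ) (X4 : Matrix.unitaryGroup (Fin p) ℂ),
      Norm.norm (Matrix.trace ((X3 : Matrix (Fin n) (Fin n) ℂ) * S⁻¹ * Bᴴ *
        (X4 : Matrix (Fin p) (Fin p) ℂ) *
        Matrix.of (fun (k : Fin p) (l : Fin n) =>
          if (l : ℕ) + p = n + (k : ℕ) ∧ p + j ≤ (k : ℕ) + n then (1 : ℂ) else 0)))
      ≤ ∑ l ∈ Finset.univ.filter (fun l : Fin n => j ≤ (l : ℕ)), β l := by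
    intro X3 X4
    rw [hrw, trace_eq hpn β j]
    have hQmem : ((X3 : Matrix (Fin n) (Fin n) ℂ) * (S⁻¹ * Rᴴ)) ∈ Matrix.unitaryGroup (Fin n) ℂ :=
      mul_mem X3.2 hG
    have hPmem : (Vᴴ * (X4 : Matrix (Fin p) (Fin p) ℂ)) ∈ Matrix.unitaryGroup (Fin p) ℂ :=
      mul_mem hVH X4.2
    exact key_bound hpn β hβ0 hβ1 hmono j hj hQmem hPmem
  -- the witness value
  have hwitness : Norm.norm (Matrix.trace ((star (S⁻¹ * Rᴴ)) * S⁻¹ * Bᴴ * V *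
        Matrix.of (fun (k : Fin p) (l : Fin n) =>
          if (l : ℕ) + p = n + (k : ℕ) ∧ p + j ≤ (k : ℕ) + n then (1 : ℂ) else 0)))
      = ∑ l ∈ Finset.univ.filter (fun l : Fin n => j ≤ (l : ℕ)), β l := by
    rw [hrw, hGG, hVV, trace_eq hpn β j 1 1]
    have hinner : ∀ k' : Fin p, (∑ k : Fin p, (β (emb hpn k) : ℂ) *
        (1 : Matrix (Fin n) (Fin n) ℂ) (emb hpn k') (emb hpn k) *
        (1 : Matrix (Fin p) (Fin p) ℂ) k k') = (β (emb hpn k') : ℂ) := by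
      intro k'
      rw [Finset.sum_eq_single k']
      · rw [Matrix.one_apply_eq, Matrix.one_apply_eq, mul_one, mul_one]
      · intro k _ hk
        rw [Matrix.one_apply_ne hk, mul_zero]
      · intro h
        exact absurd (Finset.mem_univ k') h
    have houter : (∑ k' : Fin p, if p + j ≤ (k' : ℕ) + n then
        (∑ k : Fin p, (β (emb hpn k) : ℂ) *
          (1 : Matrix (Fin n) (Fin n) ℂ) (emb hpn k') (emb hpn k) *
          (1 : Matrix (Fin p) (Fin p) ℂ) k k') else 0)
        = ∑ k' : Fin p, if p + j ≤ (k' : ℕ) + n then ((β (emb hpn k') : ℂ)) else 0 := by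
      apply Finset.sum_congr rfl
      intro k' _
      exact if_congr Iff.rfl (hinner k') rfl
    rw [houter, ← Finset.sum_filter]
    have hfc : Finset.univ.filter (fun k' : Fin p => p + j ≤ (k' : ℕ) + n)
        = Finset.univ.filter (fun k' : Fin p => p + j - n ≤ (k' : ℕ)) := by
      apply Finset.filter_congr
      intro k _
      omega
    rw [hfc, ← Complex.ofReal_sum, sum_emb hpn j hj β, Complex.norm_real, Real.norm_eq_abs,
      abs_of_nonneg (Finset.sum_nonneg (fun l _ => hβ0 l))]
  -- conclude
  apply le_antisymm
  · exact ciSup_le fun X3 => ciSup_le fun X4 => bound X3 X4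
  · have hbdd : ∀ X3 : Matrix.unitaryGroup (Fin n) ℂ,
        BddAbove (Set.range fun X4 : Matrix.unitaryGroup (Fin p) ℂ =>
          Norm.norm (Matrix.trace ((X3 : Matrix (Fin n) (Fin n) ℂ) * S⁻¹ * Bᴴ *
            (X4 : Matrix (Fin p) (Fin p) ℂ) *
            Matrix.of (fun (k : Fin p) (l : Fin n) =>
              if (l : ℕ) + p = n + (k : ℕ) ∧ p + j ≤ (k : ℕ) + n then (1 : ℂ) else 0)))) := by
      intro X3
      refine ⟨∑ l ∈ Finset.univ.filter (fun l : Fin n => j ≤ (l : ℕ)), β l, ?_⟩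
      rintro x ⟨X4, rfl⟩
      exact bound X3 X4
    have hbdd2 : BddAbove (Set.range fun X3 : Matrix.unitaryGroup (Fin n) ℂ =>
        ⨆ X4 : Matrix.unitaryGroup (Fin p) ℂ,
          Norm.norm (Matrix.trace ((X3 : Matrix (Fin n) (Fin n) ℂ) * S⁻¹ * Bᴴ *
            (X4 : Matrix (Fin p) (Fin p) ℂ) *
            Matrix.of (fun (k : Fin p) (l : Fin n) =>
              if (l : ℕ) + p = n + (k : ℕ) ∧ p + j ≤ (k : ℕ) + n then (1 : ℂ) else 0)))) := by
      refine ⟨∑ l ∈ Finset.univ.filter (fun l : Fin n => j ≤ (l : ℕ)), β l, ?_⟩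
      rintro x ⟨X3, rfl⟩
      exact ciSup_le fun X4 => bound X3 X4
    calc ∑ l ∈ Finset.univ.filter (fun l : Fin n => j ≤ (l : ℕ)), β l
        = Norm.norm (Matrix.trace (((⟨star (S⁻¹ * Rᴴ), hGstar⟩ :
            Matrix.unitaryGroup (Fin n) ℂ) : Matrix (Fin n) (Fin n) ℂ) * S⁻¹ * Bᴴ *
            ((⟨V, hV⟩ : Matrix.unitaryGroup (Fin p) ℂ) : Matrix (Fin p) (Fin p) ℂ) *
            Matrix.of (fun (k : Fin p) (l : Fin n) =>
              if (l : ℕ) + p = n + (k : ℕ) ∧ p + j ≤ (k : ℕ) + n then (1 : ℂ) else 0))) :=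
          hwitness.symm
      _ ≤ ⨆ X4 : Matrix.unitaryGroup (Fin p) ℂ,
            Norm.norm (Matrix.trace (((⟨star (S⁻¹ * Rᴴ), hGstar⟩ :
              Matrix.unitaryGroup (Fin n) ℂ) : Matrix (Fin n) (Fin n) ℂ) * S⁻¹ * Bᴴ *
              (X4 : Matrix (Fin p) (Fin p) ℂ) *
              Matrix.of (fun (k : Fin p) (l : Fin n) =>
                if (l : ℕ) + p = n + (k : ℕ) ∧ p + j ≤ (k : ℕ) + n then (1 : ℂ) else 0))) :=
          le_ciSup (hbdd _) (⟨V, hV⟩ : Matrix.unitaryGroup (Fin p) ℂ)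
      _ ≤ _ := le_ciSup hbdd2 (⟨star (S⁻¹ * Rᴴ), hGstar⟩ : Matrix.unitaryGroup (Fin n) ℂ)
end Stmt7Aux

theorem stmt7
    {m p n : ℕ} (hpn : p ≤ n)
    (A : Matrix (Fin m) (Fin n) ℂ) (B : Matrix (Fin p) (Fin n) ℂ)
    (hrank : (Matrix.fromRows A B).rank = n)
    (V : Matrix (Fin p) (Fin p) ℂ) (hV : V ∈ Matrix.unitaryGroup (Fin p) ℂ)
    (R : Matrix (Fin n) (Fin n) ℂ) (hR : IsUnit R.det)
    (β : Fin n → ℝ)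
    (hβ0 : ∀ k, 0 ≤ β k) (hβ1 : ∀ k, β k ≤ 1) (hmono : Monotone β)
    (hzero : ∀ k : Fin n, (k : ℕ) + p < n → β k = 0)
    (hB : B = V * (Matrix.of fun (k : Fin p) (l : Fin n) =>
        if (l : ℕ) + p = n + (k : ℕ) then Complex.ofReal (β l) else 0) * R)
    (hAA : Aᴴ * A = Rᴴ * Matrix.diagonal (fun l => Complex.ofReal (1 - β l ^ 2)) * R)
    (S : Matrix (Fin n) (Fin n) ℂ) (hS : S.PosDef)
    (hSsq : S * S = Aᴴ * A + Bᴴ * B)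
    (i : Fin n) (hip : n ≤ p + (i : ℕ)) :
    β i =
(⨆ X3 : Matrix.unitaryGroup (Fin n) ℂ, ⨆ X4 : Matrix.unitaryGroup (Fin p) ℂ,
      Norm.norm (Matrix.trace ((X3 : Matrix (Fin n) (Fin n) ℂ) * S⁻¹ * Bᴴ *
        (X4 : Matrix (Fin p) (Fin p) ℂ) *
        Matrix.of (fun (k : Fin p) (l : Fin n) =>
          if (l : ℕ) + p = n + (k : ℕ) ∧ p + (i : ℕ) ≤ (k : ℕ) + n then (1 : ℂ) else 0)))) -
(⨆ X3 : Matrix.unitaryGroup (Fin n) ℂ, ⨆ X4 : Matrix.unitaryGroup (Fin p) ℂ,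
      Norm.norm (Matrix.trace ((X3 : Matrix (Fin n) (Fin n) ℂ) * S⁻¹ * Bᴴ *
        (X4 : Matrix (Fin p) (Fin p) ℂ) *
        Matrix.of (fun (k : Fin p) (l : Fin n) =>
          if (l : ℕ) + p = n + (k : ℕ) ∧ p + (i : ℕ) + 1 ≤ (k : ℕ) + n then (1 : ℂ) else 0)))) := by
  have h1 := Stmt7Aux.key_sup hpn A B V hV R hR β hβ0 hβ1 hmono hzero hB hAA S hS hSsq
    (i : ℕ) hip
  have h2 := Stmt7Aux.key_sup hpn A B V hV R hR β hβ0 hβ1 hmono hzero hB hAA S hS hSsq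
    ((i : ℕ) + 1) (by omega)
  simp only [← add_assoc] at h2
  rw [h1, h2]
  have hsplit : Finset.univ.filter (fun l : Fin n => (i : ℕ) ≤ (l : ℕ))
      = insert i (Finset.univ.filter (fun l : Fin n => (i : ℕ) + 1 ≤ (l : ℕ))) := by
    ext l
    simp only [Finset.mem_filter, Finset.mem_univ, true_and, Finset.mem_insert, Fin.ext_iff]
    omega
  rw [hsplit, Finset.sum_insert (by
    simp only [Finset.mem_filter, Finset.mem_univ, true_and]
    omega)]
  ring
end

section
/- Let n ≤ m and let {A,B} be an (m,p,n)-GMP with GSVD as in the context, with generalized singular values (αᵢ, βᵢ). Then for every 1 ≤ i ≤ n, max_{Φ ∈ 𝕌_m} Re tr(Aᴴ Φᴴ Q_i Φ A (AᴴA + BᴴB)^{-1}) = α₁² + α₂² + ⋯ + αᵢ². -/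
open Matrix BigOperators
open scoped ComplexOrder


-- aux inequality
lemma aux_ineq {n : ℕ} (a c : Fin n → ℝ) (i : Fin n) (ha0 : ∀ k, 0 ≤ a k)
    (hmono : Antitone a) (hc0 : ∀ k, 0 ≤ c k) (hc1 : ∀ k, c k ≤ 1)
    (hsum : ∑ k, c k ≤ (i : ℕ) + 1) :
    ∑ k, a k * c k ≤ ∑ k ∈ Finset.Iic i, a k := by
  have key : ∀ k : Fin n, a k * c k ≤ (if k ∈ Finset.Iic i then a k - a i else 0) + a i * c k := by
    intro k
    by_cases h : k ≤ i
    · have h1 : a i ≤ a k := hmono h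
      simp only [Finset.mem_Iic, h, if_pos]
      nlinarith [hc1 k, hc0 k]
    · have h1 : a k ≤ a i := hmono (le_of_not_ge h)
      simp only [Finset.mem_Iic, h, if_neg, not_false_iff]
      nlinarith [hc0 k]
  calc ∑ k, a k * c k ≤ ∑ k : Fin n, ((if k ∈ Finset.Iic i then a k - a i else 0) + a i * c k) :=
        Finset.sum_le_sum fun k _ => key k
    _ = (∑ k ∈ Finset.Iic i, (a k - a i)) + a i * ∑ k, c k := by
        rw [Finset.sum_add_distrib, Finset.sum_ite_mem, Finset.univ_inter, Finset.mul_sum]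
    _ = (∑ k ∈ Finset.Iic i, a k) - ((i : ℕ) + 1) * a i + a i * ∑ k, c k := by
        rw [Finset.sum_sub_distrib, Finset.sum_const, Fin.card_Iic]
        push_cast; ring
    _ ≤ ∑ k ∈ Finset.Iic i, a k := by
        nlinarith [ha0 i, hsum]

lemma trace_formula_s8 {m n : ℕ} (hnm : n ≤ m) (α : Fin n → ℝ) (i : Fin n)
    (Ψ : Matrix (Fin m) (Fin m) ℂ) :
    (Matrix.trace ((Matrix.of fun (k : Fin m) (l : Fin n) =>
        if (k:ℕ) = (l:ℕ) then (Complex.ofReal (α l)) else 0)ᴴ * Ψᴴ *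
      Matrix.diagonal (fun k : Fin m => if (k:ℕ) ≤ (i:ℕ) then (1:ℂ) else 0) * Ψ *
      (Matrix.of fun (k : Fin m) (l : Fin n) => if (k:ℕ) = (l:ℕ) then (Complex.ofReal (α l)) else 0))).re
    = ∑ l : Fin n, (α l)^2 * ∑ j : Fin m, (if (j:ℕ) ≤ (i:ℕ) then (1:ℝ) else 0) * Complex.normSq (Ψ j (Fin.castLE hnm l)) := by
  set Sg : Matrix (Fin m) (Fin n) ℂ := Matrix.of fun (k : Fin m) (l : Fin n) =>
      if (k:ℕ) = (l:ℕ) then (Complex.ofReal (α l)) else 0 with hSg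
  set Q : Matrix (Fin m) (Fin m) ℂ :=
      Matrix.diagonal (fun k : Fin m => if (k:ℕ) ≤ (i:ℕ) then (1:ℂ) else 0) with hQ
  have hcond : ∀ (k : Fin m) (l : Fin n), ((k:ℕ) = (l:ℕ)) ↔ (k = Fin.castLE hnm l) := by
    intro k l; rw [Fin.ext_iff]; simp
  have hSg2 : ∀ (k : Fin m) (l : Fin n),
      Sg k l = if k = Fin.castLE hnm l then (Complex.ofReal (α l)) else 0 := by
    intro k l; simp only [hSg, Matrix.of_apply]; rw [if_congr (hcond k l) rfl rfl]
  have hdiag : ∀ l : Fin n, (Sgᴴ * (Ψᴴ * Q * Ψ) * Sg) l l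
      = ((α l : ℂ))^2 * (Ψᴴ * Q * Ψ) (Fin.castLE hnm l) (Fin.castLE hnm l) := by
    intro l
    rw [Matrix.mul_apply]
    have : ∀ k' : Fin m, (Sgᴴ * (Ψᴴ * Q * Ψ)) l k' * Sg k' l
        = if k' = Fin.castLE hnm l then (Sgᴴ * (Ψᴴ * Q * Ψ)) l k' * (α l : ℂ) else 0 := by
      intro k'; rw [hSg2]; split <;> simp
    rw [Finset.sum_congr rfl fun k' _ => this k', Finset.sum_ite_eq' Finset.univ]
    simp only [Finset.mem_univ, if_pos]
    rw [Matrix.mul_apply]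
    have h2 : ∀ k : Fin m, Sgᴴ l k * (Ψᴴ * Q * Ψ) k (Fin.castLE hnm l)
        = if k = Fin.castLE hnm l then (α l : ℂ) * (Ψᴴ * Q * Ψ) k (Fin.castLE hnm l) else 0 := by
      intro k; rw [Matrix.conjTranspose_apply, hSg2]; split <;> simp
    rw [Finset.sum_congr rfl fun k _ => h2 k, Finset.sum_ite_eq' Finset.univ]
    simp only [Finset.mem_univ, if_pos]
    ring
  have hG : ∀ c : Fin m, (Ψᴴ * Q * Ψ) c c
      = ∑ j : Fin m, (if (j:ℕ) ≤ (i:ℕ) then (1:ℂ) else 0) * (Complex.normSq (Ψ j c) : ℂ) := by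
    intro c
    rw [Matrix.mul_apply]
    refine Finset.sum_congr rfl fun j _ => ?_
    rw [hQ, Matrix.mul_diagonal, Matrix.conjTranspose_apply]
    split <;> simp [Complex.normSq_eq_conj_mul_self] <;> ring
  rw [show Sgᴴ * Ψᴴ * Q * Ψ * Sg = Sgᴴ * (Ψᴴ * Q * Ψ) * Sg from by
    rw [Matrix.mul_assoc Sgᴴ Ψᴴ Q, Matrix.mul_assoc Sgᴴ (Ψᴴ*Q) Ψ]]
  rw [Matrix.trace]
  simp only [Matrix.diag, hdiag, hG]
  rw [Complex.re_sum]
  refine Finset.sum_congr rfl fun l _ => ?_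
  rw [Finset.mul_sum, Complex.re_sum, Finset.mul_sum]
  refine Finset.sum_congr rfl fun j _ => ?_
  split <;> simp [← Complex.ofReal_pow, ← Complex.ofReal_mul]


theorem stmt8
    {m p n : ℕ} (hnm : n ≤ m)
    (A : Matrix (Fin m) (Fin n) ℂ) (B : Matrix (Fin p) (Fin n) ℂ)
    (hrank : (Matrix.fromRows A B).rank = n)
    (U : Matrix (Fin m) (Fin m) ℂ) (hU : U ∈ Matrix.unitaryGroup (Fin m) ℂ)
    (R : Matrix (Fin n) (Fin n) ℂ) (hR : IsUnit R.det)
    (α : Fin n → ℝ)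
    (hα0 : ∀ k, 0 ≤ α k) (hα1 : ∀ k, α k ≤ 1) (hmono : Antitone α)
    (hA : A = U * (Matrix.of fun (k : Fin m) (l : Fin n) =>
        if (k : ℕ) = (l : ℕ) then Complex.ofReal (α l) else 0) * R)
    (hBB : Bᴴ * B = Rᴴ * Matrix.diagonal (fun l => Complex.ofReal (1 - α l ^ 2)) * R)
    (i : Fin n) :
(⨆ Φ : Matrix.unitaryGroup (Fin m) ℂ,
      (Matrix.trace (Aᴴ * (Φ : Matrix (Fin m) (Fin m) ℂ)ᴴ *
        Matrix.diagonal (fun k : Fin m => if (k : ℕ) ≤ (i : ℕ) then (1 : ℂ) else 0) *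
        (Φ : Matrix (Fin m) (Fin m) ℂ) * A * (Aᴴ * A + Bᴴ * B)⁻¹)).re) =
      ∑ k ∈ Finset.Iic i, α k ^ 2 := by
  set Sg : Matrix (Fin m) (Fin n) ℂ := Matrix.of fun (k : Fin m) (l : Fin n) =>
      if (k:ℕ) = (l:ℕ) then (Complex.ofReal (α l)) else 0 with hSg
  set Q : Matrix (Fin m) (Fin m) ℂ :=
      Matrix.diagonal (fun k : Fin m => if (k:ℕ) ≤ (i:ℕ) then (1:ℂ) else 0) with hQ
  have hUU : Uᴴ * U = 1 := by
    have := (Matrix.mem_unitaryGroup_iff'.mp hU)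
    rwa [Matrix.star_eq_conjTranspose] at this
  have hcond : ∀ (k : Fin m) (l : Fin n), ((k:ℕ) = (l:ℕ)) ↔ (k = Fin.castLE hnm l) := by
    intro k l; rw [Fin.ext_iff]; simp
  have hSg2 : ∀ (k : Fin m) (l : Fin n),
      Sg k l = if k = Fin.castLE hnm l then (Complex.ofReal (α l)) else 0 := by
    intro k l; simp only [hSg, Matrix.of_apply]; rw [if_congr (hcond k l) rfl rfl]
  -- Sgᴴ * Sg = diagonal α²
  have hSS : Sgᴴ * Sg = Matrix.diagonal (fun l => (Complex.ofReal (α l))^2) := by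
    ext l l'
    rw [Matrix.mul_apply]
    have h1 : ∀ k : Fin m, Sgᴴ l k * Sg k l'
        = if k = Fin.castLE hnm l then (Complex.ofReal (α l)) * Sg k l' else 0 := by
      intro k; rw [Matrix.conjTranspose_apply, hSg2]; split <;> simp
    rw [Finset.sum_congr rfl fun k _ => h1 k, Finset.sum_ite_eq' Finset.univ]
    simp only [Finset.mem_univ, if_pos]
    rw [hSg2, Matrix.diagonal_apply]
    have : (Fin.castLE hnm l = Fin.castLE hnm l') ↔ l = l' := by
      constructor
      · intro h; exact Fin.castLE_injective hnm h
      · intro h; rw [h]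
    rw [if_congr this rfl rfl]
    split <;> [skip; simp]
    rename_i h; subst h; ring
  -- M = Rᴴ R
  have hAA : Aᴴ * A = Rᴴ * (Sgᴴ * Sg) * R := by
    rw [hA]
    simp only [Matrix.conjTranspose_mul, Matrix.mul_assoc]
    rw [← Matrix.mul_assoc Uᴴ U (Sg * R), hUU, Matrix.one_mul]
  have hM : Aᴴ * A + Bᴴ * B = Rᴴ * R := by
    rw [hAA, hSS, hBB]
    rw [Matrix.mul_assoc Rᴴ _ R, Matrix.mul_assoc Rᴴ _ R, ← Matrix.mul_add, ← Matrix.add_mul,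
      Matrix.diagonal_add]
    have hone : (fun l => (Complex.ofReal (α l))^2 + Complex.ofReal (1 - α l ^ 2)) = fun _ => (1:ℂ) := by
      funext l; push_cast; ring
    rw [hone, Matrix.diagonal_one, Matrix.one_mul]
  have hRH : IsUnit (Rᴴ).det := by
    rw [Matrix.det_conjTranspose]; exact hR.star
  have hMinv : (Aᴴ * A + Bᴴ * B)⁻¹ = R⁻¹ * (Rᴴ)⁻¹ := by
    rw [hM, Matrix.mul_inv_rev]
  -- trace reduction
  have htr : ∀ Φ : Matrix (Fin m) (Fin m) ℂ,
      Matrix.trace (Aᴴ * Φᴴ * Q * Φ * A * (Aᴴ * A + Bᴴ * B)⁻¹)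
        = Matrix.trace (Sgᴴ * (Φ * U)ᴴ * Q * (Φ * U) * Sg) := by
    intro Φ
    have hkey : Aᴴ * Φᴴ * Q * Φ * A * (Aᴴ * A + Bᴴ * B)⁻¹
        = Rᴴ * (Sgᴴ * (Φ * U)ᴴ * Q * (Φ * U) * Sg * (Rᴴ)⁻¹) := by
      rw [hMinv, hA]
      simp only [Matrix.conjTranspose_mul, Matrix.mul_assoc]
      rw [← Matrix.mul_assoc R R⁻¹, Matrix.mul_nonsing_inv _ hR, Matrix.one_mul]
    rw [hkey, Matrix.trace_mul_comm,
      Matrix.mul_assoc (Sgᴴ * (Φ * U)ᴴ * Q * (Φ * U) * Sg) (Rᴴ)⁻¹ Rᴴ,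
      Matrix.nonsing_inv_mul _ hRH, Matrix.mul_one]
  -- the value functional
  set F : Matrix (Fin m) (Fin m) ℂ → ℝ := fun Ψ =>
    ∑ l : Fin n, (α l)^2 * ∑ j : Fin m,
      (if (j:ℕ) ≤ (i:ℕ) then (1:ℝ) else 0) * Complex.normSq (Ψ j (Fin.castLE hnm l)) with hF
  have hval : ∀ Φ : Matrix.unitaryGroup (Fin m) ℂ,
      (Matrix.trace (Aᴴ * (Φ : Matrix (Fin m) (Fin m) ℂ)ᴴ * Q *
        (Φ : Matrix (Fin m) (Fin m) ℂ) * A * (Aᴴ * A + Bᴴ * B)⁻¹)).re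
        = F ((Φ : Matrix (Fin m) (Fin m) ℂ) * U) := by
    intro Φ
    rw [htr Φ, hF]
    exact trace_formula_s8 hnm α i _
  -- row/column sums of a unitary matrix
  have hrowcol : ∀ Ψ ∈ Matrix.unitaryGroup (Fin m) ℂ,
      (∀ j : Fin m, ∑ k : Fin m, Complex.normSq (Ψ j k) = 1) ∧
      (∀ c : Fin m, ∑ j : Fin m, Complex.normSq (Ψ j c) = 1) := by
    intro Ψ hΨ
    constructor
    · intro j
      have h := Matrix.mem_unitaryGroup_iff.mp hΨ
      have h2 := congrFun (congrFun h j) j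
      rw [Matrix.mul_apply, Matrix.one_apply_eq] at h2
      have h3 : ∀ k : Fin m, Ψ j k * (star Ψ) k j = (Complex.normSq (Ψ j k) : ℂ) := by
        intro k
        rw [Matrix.star_eq_conjTranspose, Matrix.conjTranspose_apply, Complex.star_def,
          Complex.mul_conj]
      rw [Finset.sum_congr rfl fun k _ => h3 k, ← Complex.ofReal_sum] at h2
      exact_mod_cast h2
    · intro c
      have h := Matrix.mem_unitaryGroup_iff'.mp hΨ
      have h2 := congrFun (congrFun h c) c
      rw [Matrix.mul_apply, Matrix.one_apply_eq] at h2
      have h3 : ∀ j : Fin m, (star Ψ) c j * Ψ j c = (Complex.normSq (Ψ j c) : ℂ) := by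
        intro j
        rw [Matrix.star_eq_conjTranspose, Matrix.conjTranspose_apply, Complex.star_def,
          mul_comm, Complex.mul_conj]
      rw [Finset.sum_congr rfl fun j _ => h3 j, ← Complex.ofReal_sum] at h2
      exact_mod_cast h2
  -- count of small indices
  have hcount : ∑ j : Fin m, (if (j:ℕ) ≤ (i:ℕ) then (1:ℝ) else 0) = (i:ℕ) + 1 := by
    have : ∀ j : Fin m, ((j:ℕ) ≤ (i:ℕ)) ↔ j ∈ Finset.Iic (Fin.castLE hnm i) := by
      intro j; simp [Fin.le_def]
    rw [Finset.sum_congr rfl fun j _ => if_congr (this j) rfl rfl]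
    rw [Finset.sum_ite_mem, Finset.univ_inter, Finset.sum_const, Fin.card_Iic]
    simp
  -- the upper bound
  have hub : ∀ Ψ ∈ Matrix.unitaryGroup (Fin m) ℂ, F Ψ ≤ ∑ k ∈ Finset.Iic i, α k ^ 2 := by
    intro Ψ hΨ
    obtain ⟨hrow, hcol⟩ := hrowcol Ψ hΨ
    set c : Fin n → ℝ := fun l => ∑ j : Fin m,
      (if (j:ℕ) ≤ (i:ℕ) then (1:ℝ) else 0) * Complex.normSq (Ψ j (Fin.castLE hnm l)) with hc
    have hc0 : ∀ l, 0 ≤ c l := by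
      intro l
      apply Finset.sum_nonneg
      intro j _
      have := Complex.normSq_nonneg (Ψ j (Fin.castLE hnm l))
      split <;> nlinarith
    have hc1 : ∀ l, c l ≤ 1 := by
      intro l
      calc c l ≤ ∑ j : Fin m, Complex.normSq (Ψ j (Fin.castLE hnm l)) := by
            apply Finset.sum_le_sum
            intro j _
            have := Complex.normSq_nonneg (Ψ j (Fin.castLE hnm l))
            split <;> nlinarith
        _ = 1 := hcol _
    have hcs : ∑ l, c l ≤ (i:ℕ) + 1 := by
      rw [hc]
      rw [Finset.sum_comm]
      calc ∑ j : Fin m, ∑ l : Fin n,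
            (if (j:ℕ) ≤ (i:ℕ) then (1:ℝ) else 0) * Complex.normSq (Ψ j (Fin.castLE hnm l))
          ≤ ∑ j : Fin m, (if (j:ℕ) ≤ (i:ℕ) then (1:ℝ) else 0) := by
            apply Finset.sum_le_sum
            intro j _
            rw [← Finset.mul_sum]
            have hle : ∑ l : Fin n, Complex.normSq (Ψ j (Fin.castLE hnm l))
                ≤ ∑ k : Fin m, Complex.normSq (Ψ j k) := by
              rw [show (∑ l : Fin n, Complex.normSq (Ψ j (Fin.castLE hnm l)))
                  = ∑ k ∈ Finset.univ.map (Fin.castLEEmb hnm), Complex.normSq (Ψ j k)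
                from by rw [Finset.sum_map]; simp [Fin.castLEEmb_apply]]
              apply Finset.sum_le_sum_of_subset_of_nonneg (Finset.subset_univ _)
              intro k _ _; exact Complex.normSq_nonneg _
            rw [hrow j] at hle
            split
            · simpa using hle
            · simp
        _ = (i:ℕ) + 1 := hcount
    rw [hF]
    exact aux_ineq (fun l => α l ^ 2) c i (fun k => sq_nonneg _)
      (fun x y h => pow_le_pow_left₀ (hα0 y) (hmono h) 2) hc0 hc1 hcs
  -- value at Ψ = 1
  have hFone : F 1 = ∑ k ∈ Finset.Iic i, α k ^ 2 := by
    show ∑ l : Fin n, (α l)^2 * ∑ j : Fin m,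
      (if (j:ℕ) ≤ (i:ℕ) then (1:ℝ) else 0) * Complex.normSq ((1 : Matrix (Fin m) (Fin m) ℂ) j (Fin.castLE hnm l)) = _
    have h1 : ∀ l : Fin n, (∑ j : Fin m,
        (if (j:ℕ) ≤ (i:ℕ) then (1:ℝ) else 0) * Complex.normSq ((1 : Matrix (Fin m) (Fin m) ℂ) j (Fin.castLE hnm l)))
        = if (l:ℕ) ≤ (i:ℕ) then (1:ℝ) else 0 := by
      intro l
      have h2 : ∀ j : Fin m, (if (j:ℕ) ≤ (i:ℕ) then (1:ℝ) else 0) *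
          Complex.normSq ((1 : Matrix (Fin m) (Fin m) ℂ) j (Fin.castLE hnm l))
          = if j = Fin.castLE hnm l then (if (j:ℕ) ≤ (i:ℕ) then (1:ℝ) else 0) else 0 := by
        intro j
        rw [Matrix.one_apply]
        by_cases h : j = Fin.castLE hnm l <;> simp [h]
      rw [Finset.sum_congr rfl fun j _ => h2 j, Finset.sum_ite_eq' Finset.univ]
      simp
    rw [Finset.sum_congr rfl fun l (_ : l ∈ Finset.univ) => congrArg _ (h1 l)]
    have : ∀ l : Fin n, α l ^ 2 * (if (l:ℕ) ≤ (i:ℕ) then (1:ℝ) else 0)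
        = if l ∈ Finset.Iic i then α l ^ 2 else 0 := by
      intro l
      simp only [Finset.mem_Iic, Fin.le_def]
      split <;> simp
    rw [Finset.sum_congr rfl fun l _ => this l, Finset.sum_ite_mem, Finset.univ_inter]
  -- put it together
  apply le_antisymm
  · exact ciSup_le fun Φ => le_of_eq_of_le (hval Φ) (hub _ (mul_mem Φ.2 hU))
  · have hbdd : BddAbove (Set.range fun Φ : Matrix.unitaryGroup (Fin m) ℂ =>
        (Matrix.trace (Aᴴ * (Φ : Matrix (Fin m) (Fin m) ℂ)ᴴ * Q *
          (Φ : Matrix (Fin m) (Fin m) ℂ) * A * (Aᴴ * A + Bᴴ * B)⁻¹)).re) := by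
      refine ⟨∑ k ∈ Finset.Iic i, α k ^ 2, ?_⟩
      rintro x ⟨Φ, rfl⟩
      exact le_of_eq_of_le (hval Φ) (hub _ (mul_mem Φ.2 hU))
    have hmem : (star U) ∈ Matrix.unitaryGroup (Fin m) ℂ := Unitary.star_mem hU
    have hle := le_ciSup hbdd (⟨star U, hmem⟩ : Matrix.unitaryGroup (Fin m) ℂ)
    have heq : (Matrix.trace (Aᴴ * ((⟨star U, hmem⟩ : Matrix.unitaryGroup (Fin m) ℂ) :
          Matrix (Fin m) (Fin m) ℂ)ᴴ * Q *
        ((⟨star U, hmem⟩ : Matrix.unitaryGroup (Fin m) ℂ) : Matrix (Fin m) (Fin m) ℂ) * A *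
        (Aᴴ * A + Bᴴ * B)⁻¹)).re = ∑ k ∈ Finset.Iic i, α k ^ 2 := by
      rw [hval]
      have h1 : ((⟨star U, hmem⟩ : Matrix.unitaryGroup (Fin m) ℂ) :
          Matrix (Fin m) (Fin m) ℂ) * U = 1 := Matrix.mem_unitaryGroup_iff'.mp hU
      rw [h1, hFone]
    exact le_of_eq_of_le heq.symm hle
end

section
/- Let n ≤ p and let {A,B} be an (m,p,n)-GMP with GSVD as in the context, with generalized singular values (αᵢ, βᵢ). Then for every 1 ≤ i ≤ n, max_{Φ ∈ 𝕌_p} Re tr(Bᴴ Φᴴ P_i Φ B (AᴴA + BᴴB)^{-1}) = βᵢ² + β_{i+1}² + ⋯ + βₙ². -/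
open Matrix BigOperators
open scoped ComplexOrder

lemma stmt9_split {n : ℕ} (i : Fin n) (f : Fin n → ℝ) :
    ∑ k, f k = ∑ k ∈ Finset.Iio i, f k + ∑ k ∈ Finset.Ici i, f k := by
  rw [← Finset.sum_union (by simp [Finset.disjoint_left])]
  congr 1
  ext k; simp; omega

lemma stmt9_key {n : ℕ} (β : Fin n → ℝ) (i : Fin n) (d : Fin n → ℝ)
    (hβ0 : ∀ k, 0 ≤ β k) (hmono : Monotone β)
    (hd0 : ∀ k, 0 ≤ d k) (hd1 : ∀ k, d k ≤ 1)
    (hsum : ∑ k, d k ≤ (Finset.Ici i).card) :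
    ∑ k, β k ^ 2 * d k ≤ ∑ k ∈ Finset.Ici i, β k ^ 2 := by
  have h1 : ∑ k ∈ Finset.Iio i, β k ^ 2 * d k ≤ β i ^ 2 * ∑ k ∈ Finset.Iio i, d k := by
    rw [Finset.mul_sum]
    refine Finset.sum_le_sum fun k hk => ?_
    have hk' : k ≤ i := le_of_lt (Finset.mem_Iio.mp hk)
    exact mul_le_mul_of_nonneg_right (pow_le_pow_left₀ (hβ0 k) (hmono hk') 2) (hd0 k)
  have h2 : β i ^ 2 * ∑ k ∈ Finset.Ici i, (1 - d k) ≤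
      ∑ k ∈ Finset.Ici i, (β k ^ 2 * (1 - d k)) := by
    rw [Finset.mul_sum]
    refine Finset.sum_le_sum fun k hk => ?_
    have hk' : i ≤ k := Finset.mem_Ici.mp hk
    exact mul_le_mul_of_nonneg_right (pow_le_pow_left₀ (hβ0 i) (hmono hk') 2)
      (by linarith [hd1 k])
  have h3 : ∑ k ∈ Finset.Iio i, d k ≤ ∑ k ∈ Finset.Ici i, (1 - d k) := by
    have hcard : ∑ k ∈ Finset.Ici i, (1 : ℝ) = (Finset.Ici i).card := by simp
    have := stmt9_split i d
    rw [Finset.sum_sub_distrib, hcard]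
    linarith
  have h4 : β i ^ 2 * ∑ k ∈ Finset.Iio i, d k ≤ β i ^ 2 * ∑ k ∈ Finset.Ici i, (1 - d k) :=
    mul_le_mul_of_nonneg_left h3 (by positivity)
  have e1 := stmt9_split i (fun k => β k ^ 2 * d k)
  have e2 : ∑ k ∈ Finset.Ici i, (β k ^ 2 * (1 - d k)) =
      ∑ k ∈ Finset.Ici i, β k ^ 2 - ∑ k ∈ Finset.Ici i, (β k ^ 2 * d k) := by
    rw [← Finset.sum_sub_distrib]; congr 1; ext k; ring
  linarith

lemma stmt9_trace {p n : ℕ} (hnp : n ≤ p) (β : Fin n → ℝ)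
    (Q : Matrix (Fin p) (Fin p) ℂ) :
    Matrix.trace ((Matrix.of fun (k : Fin p) (l : Fin n) =>
        if (k : ℕ) + n = p + (l : ℕ) then Complex.ofReal (β l) else 0)ᴴ * Q *
      (Matrix.of fun (k : Fin p) (l : Fin n) =>
        if (k : ℕ) + n = p + (l : ℕ) then Complex.ofReal (β l) else 0))
    = ∑ l : Fin n, ((β l : ℂ))^2 *
        Q ⟨p - n + (l : ℕ), by omega⟩ ⟨p - n + (l : ℕ), by omega⟩ := by
  have hcond : ∀ (k : Fin p) (l : Fin n), ((k : ℕ) + n = p + (l : ℕ)) ↔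
      k = (⟨p - n + (l : ℕ), by omega⟩ : Fin p) := by
    intro k l
    rw [Fin.ext_iff]
    simp only []
    omega
  simp only [Matrix.trace, Matrix.diag, Matrix.mul_apply, Matrix.conjTranspose_apply,
    Matrix.of_apply, hcond]
  refine Finset.sum_congr rfl fun l _ => ?_
  simp only [mul_ite, mul_zero, ite_mul, zero_mul, apply_ite (star : ℂ → ℂ), star_zero,
    Finset.sum_ite_eq', Finset.mem_univ, if_true, Complex.star_def, Complex.conj_ofReal]
  ring

lemma stmt9_SS {p n : ℕ} (hnp : n ≤ p) (β : Fin n → ℝ) :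
    (Matrix.of fun (k : Fin p) (l : Fin n) =>
        if (k : ℕ) + n = p + (l : ℕ) then Complex.ofReal (β l) else 0)ᴴ *
    (Matrix.of fun (k : Fin p) (l : Fin n) =>
        if (k : ℕ) + n = p + (l : ℕ) then Complex.ofReal (β l) else 0)
    = Matrix.diagonal (fun l => ((β l : ℂ))^2) := by
  ext l l'
  have hcond : ∀ (k : Fin p) (l : Fin n), ((k : ℕ) + n = p + (l : ℕ)) ↔
      k = (⟨p - n + (l : ℕ), by omega⟩ : Fin p) := by
    intro k l
    rw [Fin.ext_iff]
    simp only []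
    omega
  simp only [Matrix.mul_apply, Matrix.conjTranspose_apply, Matrix.of_apply, hcond,
    mul_ite, mul_zero, ite_mul, zero_mul, apply_ite (star : ℂ → ℂ), star_zero,
    Finset.sum_ite_eq', Finset.mem_univ, if_true, Complex.star_def, Complex.conj_ofReal,
    Matrix.diagonal_apply]
  by_cases h : l = l'
  · subst h
    simp only [if_pos rfl, if_true]
    ring
  · have h2 : (⟨p - n + (l : ℕ), by omega⟩ : Fin p) ≠ ⟨p - n + (l' : ℕ), by omega⟩ := by
      simp only [ne_eq, Fin.mk.injEq]
      omega
    simp [h, h2]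
    exact fun hc => absurd (Fin.ext hc).symm h

lemma stmt9_diag {p : ℕ} (W : Matrix (Fin p) (Fin p) ℂ) (χ : Fin p → ℝ) (k : Fin p) :
    (Wᴴ * Matrix.diagonal (fun j => ((χ j : ℝ) : ℂ)) * W) k k
      = ((∑ j, χ j * Complex.normSq (W j k) : ℝ) : ℂ) := by
  rw [Complex.ofReal_sum]
  simp only [Matrix.mul_apply, Matrix.conjTranspose_apply, Matrix.diagonal_apply,
    mul_ite, mul_zero, Finset.sum_ite_eq', Finset.mem_univ, if_true]
  refine Finset.sum_congr rfl fun j _ => ?_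
  rw [Complex.ofReal_mul, Complex.normSq_eq_conj_mul_self]
  simp only [Complex.star_def]
  ring

theorem stmt9
    {m p n : ℕ} (hnp : n ≤ p)
    (A : Matrix (Fin m) (Fin n) ℂ) (B : Matrix (Fin p) (Fin n) ℂ)
    (hrank : (Matrix.fromRows A B).rank = n)
    (V : Matrix (Fin p) (Fin p) ℂ) (hV : V ∈ Matrix.unitaryGroup (Fin p) ℂ)
    (R : Matrix (Fin n) (Fin n) ℂ) (hR : IsUnit R.det)
    (β : Fin n → ℝ)
    (hβ0 : ∀ k, 0 ≤ β k) (hβ1 : ∀ k, β k ≤ 1) (hmono : Monotone β)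
    (hB : B = V * (Matrix.of fun (k : Fin p) (l : Fin n) =>
        if (k : ℕ) + n = p + (l : ℕ) then Complex.ofReal (β l) else 0) * R)
    (hAA : Aᴴ * A = Rᴴ * Matrix.diagonal (fun l => Complex.ofReal (1 - β l ^ 2)) * R)
    (i : Fin n) :
(⨆ Φ : Matrix.unitaryGroup (Fin p) ℂ,
      (Matrix.trace (Bᴴ * (Φ : Matrix (Fin p) (Fin p) ℂ)ᴴ *
        Matrix.diagonal (fun k : Fin p => if p + (i : ℕ) ≤ (k : ℕ) + n then (1 : ℂ) else 0) *
        (Φ : Matrix (Fin p) (Fin p) ℂ) * B * (Aᴴ * A + Bᴴ * B)⁻¹)).re) =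
      ∑ k ∈ Finset.Ici i, β k ^ 2 := by
  classical
  set S : Matrix (Fin p) (Fin n) ℂ := Matrix.of fun (k : Fin p) (l : Fin n) =>
      if (k : ℕ) + n = p + (l : ℕ) then Complex.ofReal (β l) else 0 with hS
  set χ : Fin p → ℝ := fun k => if p + (i : ℕ) ≤ (k : ℕ) + n then (1 : ℝ) else 0 with hχ
  set P : Matrix (Fin p) (Fin p) ℂ :=
      Matrix.diagonal (fun k : Fin p => if p + (i : ℕ) ≤ (k : ℕ) + n then (1 : ℂ) else 0) with hPdef
  have hP : P = Matrix.diagonal (fun k => ((χ k : ℝ) : ℂ)) := by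
    rw [hPdef]
    ext a b
    by_cases hab : a = b
    · subst hab
      by_cases h : p + (i : ℕ) ≤ (a : ℕ) + n <;>
        simp [Matrix.diagonal_apply_eq, hχ, h]
    · simp [Matrix.diagonal_apply_ne _ hab]
  have hV1 : Vᴴ * V = 1 := by
    have := (Unitary.mem_iff.mp hV).1
    rwa [Matrix.star_eq_conjTranspose] at this
  have hRT : IsUnit Rᴴ.det := by
    rw [Matrix.det_conjTranspose]; exact hR.star
  -- φ
  set φ : Fin n → Fin p := fun l => (⟨p - n + (l : ℕ), by omega⟩ : Fin p) with hφ
  have hφinj : Function.Injective φ := by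
    intro a b hab
    rw [hφ] at hab
    simp only [Fin.mk.injEq] at hab
    exact Fin.ext (by omega)
  -- B^H B
  have hBB : Bᴴ * B = Rᴴ * Matrix.diagonal (fun l => ((β l : ℂ))^2) * R := by
    rw [hB]
    have h1 : Sᴴ * (Vᴴ * (V * (S * R))) = Sᴴ * (S * R) := by
      rw [← Matrix.mul_assoc Vᴴ V, hV1, Matrix.one_mul]
    simp only [Matrix.conjTranspose_mul, Matrix.mul_assoc, h1]
    rw [← Matrix.mul_assoc Sᴴ S, stmt9_SS hnp β]
  have hdd : Matrix.diagonal (fun l : Fin n => Complex.ofReal (1 - β l ^ 2)) +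
      Matrix.diagonal (fun l => ((β l : ℂ))^2) = 1 := by
    rw [Matrix.diagonal_add, ← Matrix.diagonal_one]
    congr 1
    funext l
    push_cast
    ring
  have hM : Aᴴ * A + Bᴴ * B = Rᴴ * R := by
    rw [hAA, hBB, ← Matrix.add_mul, ← Matrix.mul_add, hdd, Matrix.mul_one]
  have hMinv : (Aᴴ * A + Bᴴ * B)⁻¹ = R⁻¹ * Rᴴ⁻¹ := by
    rw [hM, Matrix.mul_inv_rev]
  -- key trace identity
  have key : ∀ Φ : Matrix (Fin p) (Fin p) ℂ,
      (Matrix.trace (Bᴴ * Φᴴ * P * Φ * B * (Aᴴ * A + Bᴴ * B)⁻¹))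
      = ∑ l : Fin n, ((β l : ℂ))^2 *
          (((Φ * V)ᴴ * P * (Φ * V)) (φ l) (φ l)) := by
    intro Φ
    have hRR : R * (R⁻¹ * Rᴴ⁻¹) = Rᴴ⁻¹ := by
      rw [← Matrix.mul_assoc, Matrix.mul_nonsing_inv _ hR, Matrix.one_mul]
    have e : Bᴴ * Φᴴ * P * Φ * B * (R⁻¹ * Rᴴ⁻¹)
        = Rᴴ * ((Sᴴ * ((Φ * V)ᴴ * P * (Φ * V)) * S) * Rᴴ⁻¹) := by
      rw [hB]
      simp only [Matrix.conjTranspose_mul, Matrix.mul_assoc, hRR]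
    rw [hMinv, e, Matrix.trace_mul_comm, Matrix.mul_assoc,
      Matrix.nonsing_inv_mul _ hRT, Matrix.mul_one, hS, stmt9_trace hnp β]
  -- diagonal entries bound for unitary W
  have hcolsum : ∀ W : Matrix (Fin p) (Fin p) ℂ, W ∈ Matrix.unitaryGroup (Fin p) ℂ →
      ∀ k, ∑ j, Complex.normSq (W j k) = 1 := by
    intro W hW k
    have h1 : Wᴴ * W = 1 := by
      have := (Unitary.mem_iff.mp hW).1
      rwa [Matrix.star_eq_conjTranspose] at this
    have h2 := congrFun (congrFun h1 k) k
    simp only [Matrix.mul_apply, Matrix.conjTranspose_apply, Matrix.one_apply_eq] at h2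
    have h3 : ((∑ j, Complex.normSq (W j k) : ℝ) : ℂ) = 1 := by
      rw [Complex.ofReal_sum, ← h2]
      refine Finset.sum_congr rfl fun j _ => ?_
      rw [Complex.normSq_eq_conj_mul_self, Complex.star_def]
    exact_mod_cast h3
  have hrowsum : ∀ W : Matrix (Fin p) (Fin p) ℂ, W ∈ Matrix.unitaryGroup (Fin p) ℂ →
      ∀ j, ∑ k, Complex.normSq (W j k) = 1 := by
    intro W hW j
    have h1 : W * Wᴴ = 1 := by
      have := (Unitary.mem_iff.mp hW).2
      rwa [Matrix.star_eq_conjTranspose] at this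
    have h2 := congrFun (congrFun h1 j) j
    simp only [Matrix.mul_apply, Matrix.conjTranspose_apply, Matrix.one_apply_eq] at h2
    have h3 : ((∑ k, Complex.normSq (W j k) : ℝ) : ℂ) = 1 := by
      rw [Complex.ofReal_sum, ← h2]
      refine Finset.sum_congr rfl fun k _ => ?_
      rw [Complex.normSq_eq_conj_mul_self, Complex.star_def]
      ring
    exact_mod_cast h3
  -- number of ones in χ
  have hχcard : ∑ j : Fin p, χ j = ((Finset.Ici i).card : ℝ) := by
    simp only [hχ]
    rw [Finset.sum_boole]
    norm_cast
    have h1 : (Finset.univ.filter fun j : Fin p => p + (i : ℕ) ≤ (j : ℕ) + n)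
        = Finset.Ici (⟨p + (i : ℕ) - n, by omega⟩ : Fin p) := by
      ext j
      simp only [Finset.mem_filter, Finset.mem_univ, true_and, Finset.mem_Ici, Fin.le_def]
      omega
    rw [h1, Fin.card_Ici, Fin.card_Ici]
    have := i.isLt
    show p - (p + (i : ℕ) - n) = n - (i : ℕ)
    omega
  -- the objective function
  set f : Matrix.unitaryGroup (Fin p) ℂ → ℝ := fun Φ =>
    (Matrix.trace (Bᴴ * (Φ : Matrix (Fin p) (Fin p) ℂ)ᴴ * P *
      (Φ : Matrix (Fin p) (Fin p) ℂ) * B * (Aᴴ * A + Bᴴ * B)⁻¹)).re with hf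
  -- value of f in terms of d
  have hval : ∀ Φ : Matrix.unitaryGroup (Fin p) ℂ,
      f Φ = ∑ l : Fin n, β l ^ 2 *
        (∑ j, χ j * Complex.normSq (((Φ : Matrix (Fin p) (Fin p) ℂ) * V) j (φ l))) := by
    intro Φ
    rw [hf]
    simp only []
    rw [key, hP]
    have e : ∀ l : Fin n, ((β l : ℂ))^2 *
        ((((Φ : Matrix (Fin p) (Fin p) ℂ) * V)ᴴ * Matrix.diagonal (fun k => ((χ k : ℝ) : ℂ)) *
          ((Φ : Matrix (Fin p) (Fin p) ℂ) * V)) (φ l) (φ l))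
        = ((β l ^ 2 * (∑ j, χ j * Complex.normSq (((Φ : Matrix (Fin p) (Fin p) ℂ) * V) j (φ l))) : ℝ) : ℂ) := by
      intro l
      rw [stmt9_diag]
      push_cast
      ring
    rw [Finset.sum_congr rfl (fun l _ => e l), ← Complex.ofReal_sum, Complex.ofReal_re]
  -- bound
  have hbound : ∀ Φ : Matrix.unitaryGroup (Fin p) ℂ, f Φ ≤ ∑ k ∈ Finset.Ici i, β k ^ 2 := by
    intro Φ
    rw [hval]
    set W : Matrix (Fin p) (Fin p) ℂ := (Φ : Matrix (Fin p) (Fin p) ℂ) * V with hW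
    have hWu : W ∈ Matrix.unitaryGroup (Fin p) ℂ := mul_mem Φ.2 hV
    set d : Fin p → ℝ := fun k => ∑ j, χ j * Complex.normSq (W j k) with hd
    have hχ01 : ∀ j, 0 ≤ χ j ∧ χ j ≤ 1 := by
      intro j
      rw [hχ]
      dsimp only
      constructor <;> split <;> norm_num
    have hd0 : ∀ k, 0 ≤ d k := by
      intro k
      refine Finset.sum_nonneg fun j _ => mul_nonneg (hχ01 j).1 (Complex.normSq_nonneg _)
    have hd1 : ∀ k, d k ≤ 1 := by
      intro k
      calc d k ≤ ∑ j, Complex.normSq (W j k) := by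
            refine Finset.sum_le_sum fun j _ => ?_
            have := Complex.normSq_nonneg (W j k)
            nlinarith [(hχ01 j).1, (hχ01 j).2]
        _ = 1 := hcolsum W hWu k
    have hsum : ∑ l : Fin n, d (φ l) ≤ ((Finset.Ici i).card : ℝ) := by
      have h1 : ∑ l : Fin n, d (φ l) = ∑ k ∈ Finset.univ.image φ, d k :=
        (Finset.sum_image (fun a _ b _ h => hφinj h)).symm
      have h2 : ∑ k ∈ Finset.univ.image φ, d k ≤ ∑ k : Fin p, d k :=
        Finset.sum_le_sum_of_subset_of_nonneg (Finset.subset_univ _)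
          (fun k _ _ => hd0 k)
      have h3 : ∑ k : Fin p, d k = ∑ j : Fin p, χ j := by
        rw [hd]
        simp only []
        rw [Finset.sum_comm]
        refine Finset.sum_congr rfl fun j _ => ?_
        rw [← Finset.mul_sum, hrowsum W hWu j, mul_one]
      rw [h1]
      calc ∑ k ∈ Finset.univ.image φ, d k ≤ ∑ k : Fin p, d k := h2
        _ = ∑ j : Fin p, χ j := h3
        _ = ((Finset.Ici i).card : ℝ) := hχcard
    exact stmt9_key β i (fun l => d (φ l)) hβ0 hmono (fun l => hd0 _) (fun l => hd1 _) hsum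
  -- value at Φ₀
  have hB0 : Vᴴ ∈ Matrix.unitaryGroup (Fin p) ℂ := by
    have := Unitary.star_mem hV
    rwa [Matrix.star_eq_conjTranspose] at this
  have hattain : f ⟨Vᴴ, hB0⟩ = ∑ k ∈ Finset.Ici i, β k ^ 2 := by
    rw [hf]
    simp only []
    rw [key]
    have hVV : (Vᴴ * V) = 1 := hV1
    have h1P : (1 : Matrix (Fin p) (Fin p) ℂ)ᴴ * P * 1 = P := by
      rw [Matrix.conjTranspose_one, Matrix.one_mul, Matrix.mul_one]
    rw [hVV, h1P]
    have e : ∀ l : Fin n, ((β l : ℂ))^2 * P (φ l) (φ l)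
        = ((if i ≤ l then β l ^ 2 else 0 : ℝ) : ℂ) := by
      intro l
      rw [hPdef, Matrix.diagonal_apply_eq]
      have hcond : (p + (i : ℕ) ≤ ((φ l) : ℕ) + n) ↔ i ≤ l := by
        rw [hφ]
        simp only [Fin.le_def]
        omega
      by_cases h : i ≤ l
      · rw [if_pos (hcond.mpr h), if_pos h]
        push_cast
        ring
      · rw [if_neg (fun hc => h (hcond.mp hc)), if_neg h]
        simp
    rw [Finset.sum_congr rfl (fun l _ => e l), ← Complex.ofReal_sum, Complex.ofReal_re]
    have hIci : Finset.Ici i = Finset.univ.filter (fun l => i ≤ l) := by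
      ext l; simp
    rw [hIci, Finset.sum_filter]
  -- conclude
  haveI : Nonempty (Matrix.unitaryGroup (Fin p) ℂ) := ⟨1⟩
  have hbdd : BddAbove (Set.range f) := by
    refine ⟨∑ k ∈ Finset.Ici i, β k ^ 2, ?_⟩
    rintro x ⟨Φ, rfl⟩
    exact hbound Φ
  refine le_antisymm (ciSup_le hbound) ?_
  calc ∑ k ∈ Finset.Ici i, β k ^ 2 = f ⟨Vᴴ, hB0⟩ := hattain.symm
    _ ≤ ⨆ Φ, f Φ := le_ciSup hbdd _
end
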